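/- arXiv:2110.03258 — 5 statements merged into one kernel-verified Lean document; each statement's English description precedes it below -/
import Mathlib

section
/- Let m be a positive integer, A a positive integer, B ∈ ℤ/Aℤ, and C : ℤ → ℤ/Aℤ a function satisfying: (1) C(i+m) = C(i) + B for all i ∈ ℤ; (2) for every r ∈ ℤ/Aℤ and all i < j with C(i) = C(j) = r and no integer k with i < k < j and C(k) = r, there exists a unique integer p₊ with i < p₊ < j and C(p₊) = r + 1, and a unique integer p₋ with i < p₋ < j and C(p₋) = r − 1. Then there exist integers K, N > 0 and a, b ∈ ℤ with N + K = A, the class of a + b in ℤ/Aℤ equal to B, a*N − b*K = m, and a standard doubly periodic tableau σ ∈ DPT(K,N,a,b) such that C = C_σ. -/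
attribute [local instance] Classical.propDecidable

namespace CFR

/-- A strictly monotone surjective map `ℤ → ℤ` is a translation. -/
lemma strictMono_surj_eq {k : ℤ → ℤ} (hk : StrictMono k) (hs : Function.Surjective k) :
    ∀ n, k n = n + k 0 := by
  have step : ∀ n, k (n + 1) = k n + 1 := by
    intro n
    obtain ⟨p, hp⟩ := hs (k n + 1)
    have hnp : n < p := hk.lt_iff_lt.1 (by omega)
    have h1 : k (n + 1) ≤ k p := hk.le_iff_le.2 (by omega)
    have h2 : k n < k (n + 1) := hk (by omega)
    omega
  intro n
  induction n using Int.induction_on with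
  | zero => omega
  | succ i ih => rw [step]; omega
  | pred i ih =>
      have h := step (-(i : ℤ) - 1)
      rw [show (-(i:ℤ) - 1 + 1) = -i by ring] at h
      omega

/-- Two strictly monotone maps `ℤ → ℤ` with the same range differ by a shift. -/
lemma exists_shift {f g : ℤ → ℤ} (hf : StrictMono f) (hg : StrictMono g)
    (hr : Set.range f = Set.range g) : ∃ t : ℤ, ∀ n, f (n + t) = g n := by
  have hmem : ∀ n : ℤ, ∃ j, f j = g n := by
    intro n
    have : g n ∈ Set.range f := hr ▸ Set.mem_range_self n
    exact this
  choose k hkk using hmem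
  have hkm : StrictMono k := by
    intro a b hab
    have : f (k a) < f (k b) := by rw [hkk, hkk]; exact hg hab
    exact hf.lt_iff_lt.1 this
  have hks : Function.Surjective k := by
    intro j
    have : f j ∈ Set.range g := hr ▸ Set.mem_range_self j
    obtain ⟨n, hn⟩ := this
    exact ⟨n, hf.injective (by rw [hkk, hn])⟩
  refine ⟨k 0, fun n => ?_⟩
  rw [← strictMono_surj_eq hkm hks n]
  exact hkk n

/-- An enumeration of the solution set of `Q`. -/
structure ZEnum (Q : ℤ → Prop) where
  e : ℤ → ℤ
  mono : StrictMono e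
  mem : ∀ n, Q (e n)
  surj : ∀ j, Q j → ∃ n, e n = j
  gap : ∀ n k, e n < k → k < e (n + 1) → ¬ Q k

section enumconstr

variable {Q : ℤ → Prop}

lemma next_ex (hup : ∀ i : ℤ, ∃ j, i < j ∧ Q j) (i : ℤ) : ∃ n : ℕ, Q (i + 1 + n) := by
  obtain ⟨j, hij, hj⟩ := hup i
  exact ⟨(j - i - 1).toNat, by rw [show i + 1 + ((j - i - 1).toNat : ℤ) = j by omega]; exact hj⟩

noncomputable def next (hup : ∀ i : ℤ, ∃ j, i < j ∧ Q j) (i : ℤ) : ℤ :=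
  i + 1 + Nat.find (next_ex hup i)

lemma next_lt (hup : ∀ i : ℤ, ∃ j, i < j ∧ Q j) (i : ℤ) : i < next hup i := by
  unfold next; omega

lemma next_mem (hup : ∀ i : ℤ, ∃ j, i < j ∧ Q j) (i : ℤ) : Q (next hup i) :=
  Nat.find_spec (next_ex hup i)

lemma next_min (hup : ∀ i : ℤ, ∃ j, i < j ∧ Q j) (i k : ℤ) (h1 : i < k)
    (h2 : k < next hup i) : ¬ Q k := by
  have hk : k = i + 1 + ((k - i - 1).toNat : ℤ) := by omega
  have hlt : (k - i - 1).toNat < Nat.find (next_ex hup i) := by unfold next at h2; omega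
  intro hQ
  exact Nat.find_min (next_ex hup i) hlt (by rw [← hk]; exact hQ)

lemma prev_ex (hdn : ∀ i : ℤ, ∃ j, j < i ∧ Q j) (i : ℤ) : ∃ n : ℕ, Q (i - 1 - n) := by
  obtain ⟨j, hij, hj⟩ := hdn i
  exact ⟨(i - 1 - j).toNat, by rw [show i - 1 - ((i - 1 - j).toNat : ℤ) = j by omega]; exact hj⟩

noncomputable def prev (hdn : ∀ i : ℤ, ∃ j, j < i ∧ Q j) (i : ℤ) : ℤ :=
  i - 1 - Nat.find (prev_ex hdn i)

lemma prev_lt (hdn : ∀ i : ℤ, ∃ j, j < i ∧ Q j) (i : ℤ) : prev hdn i < i := by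
  unfold prev; omega

lemma prev_mem (hdn : ∀ i : ℤ, ∃ j, j < i ∧ Q j) (i : ℤ) : Q (prev hdn i) :=
  Nat.find_spec (prev_ex hdn i)

lemma prev_max (hdn : ∀ i : ℤ, ∃ j, j < i ∧ Q j) (i k : ℤ) (h1 : prev hdn i < k)
    (h2 : k < i) : ¬ Q k := by
  have hk : k = i - 1 - ((i - 1 - k).toNat : ℤ) := by omega
  have hlt : (i - 1 - k).toNat < Nat.find (prev_ex hdn i) := by unfold prev at h1; omega
  intro hQ
  exact Nat.find_min (prev_ex hdn i) hlt (by rw [← hk]; exact hQ)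

variable (hup : ∀ i : ℤ, ∃ j, i < j ∧ Q j) (hdn : ∀ i : ℤ, ∃ j, j < i ∧ Q j)

noncomputable def FF : ℕ → ℤ
  | 0 => next hup 0
  | n + 1 => next hup (FF n)

noncomputable def GG : ℕ → ℤ
  | 0 => next hup 0
  | n + 1 => prev hdn (GG n)

noncomputable def enum (n : ℤ) : ℤ := if 0 ≤ n then FF hup n.toNat else GG hup hdn (-n).toNat

lemma FF_mem : ∀ t : ℕ, Q (FF hup t)
  | 0 => next_mem hup 0
  | t + 1 => next_mem hup (FF hup t)

lemma GG_mem : ∀ t : ℕ, Q (GG hup hdn t)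
  | 0 => next_mem hup 0
  | t + 1 => prev_mem hdn (GG hup hdn t)

lemma enum_mem (n : ℤ) : Q (enum hup hdn n) := by
  unfold enum; split
  · exact FF_mem hup _
  · exact GG_mem hup hdn _

lemma enum_lt_succ (n : ℤ) : enum hup hdn n < enum hup hdn (n + 1) := by
  unfold enum
  rcases le_or_gt 0 n with h | h
  · rw [if_pos h, if_pos (by omega), show (n + 1).toNat = n.toNat + 1 by omega]
    exact next_lt hup _
  · rcases eq_or_lt_of_le (show n ≤ -1 by omega) with h1 | h1
    · subst h1
      norm_num
      show GG hup hdn 1 < FF hup 0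
      exact prev_lt hdn _
    · rw [if_neg (by omega), if_neg (by omega),
        show (-n).toNat = (-(n+1)).toNat + 1 by omega]
      exact prev_lt hdn _

lemma enum_mono : StrictMono (enum hup hdn) :=
  strictMono_int_of_lt_succ (enum_lt_succ hup hdn)

lemma enum_gap (n k : ℤ) (h1 : enum hup hdn n < k) (h2 : k < enum hup hdn (n + 1)) : ¬ Q k := by
  unfold enum at h1 h2
  rcases le_or_gt 0 n with h | h
  · rw [if_pos h] at h1
    rw [if_pos (by omega), show (n + 1).toNat = n.toNat + 1 by omega] at h2
    exact next_min hup _ _ h1 h2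
  · rcases eq_or_lt_of_le (show n ≤ -1 by omega) with hh | hh
    · subst hh
      norm_num at h1 h2
      have h1' : prev hdn (GG hup hdn 0) < k := h1
      have h2' : k < GG hup hdn 0 := h2
      exact prev_max hdn _ _ h1' h2'
    · rw [if_neg (by omega), show (-n).toNat = (-(n+1)).toNat + 1 by omega] at h1
      rw [if_neg (by omega)] at h2
      exact prev_max hdn _ _ h1 h2

lemma enum_surj (j : ℤ) (hj : Q j) : ∃ n, enum hup hdn n = j := by
  rcases le_or_gt (next hup 0) j with hb | hb
  · have grow : ∀ t : ℕ, next hup 0 + t ≤ FF hup t := by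
      intro t
      induction t with
      | zero => simp [FF]
      | succ t ih =>
          have h1 : FF hup t < FF hup (t + 1) := next_lt hup _
          push_cast
          omega
    have hex : ∃ t : ℕ, j < FF hup t := by
      refine ⟨(j - next hup 0 + 1).toNat, ?_⟩
      have := grow (j - next hup 0 + 1).toNat
      omega
    have ht0 := Nat.find_spec hex
    have h0 : Nat.find hex ≠ 0 := by
      intro h
      rw [h] at ht0
      have : FF hup 0 = next hup 0 := rfl
      omega
    obtain ⟨t, ht⟩ := Nat.exists_eq_succ_of_ne_zero h0
    rw [ht] at ht0
    have hle : ¬ j < FF hup t := Nat.find_min hex (by omega)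
    rcases eq_or_lt_of_le (not_lt.1 hle) with he | hlt
    · exact ⟨(t : ℤ), by unfold enum; rw [if_pos (by omega), Int.toNat_natCast, he]⟩
    · exact absurd hj (next_min hup _ _ hlt ht0)
  · have decay : ∀ t : ℕ, GG hup hdn t ≤ next hup 0 - t := by
      intro t
      induction t with
      | zero => simp [GG]
      | succ t ih =>
          have : GG hup hdn (t + 1) < GG hup hdn t := prev_lt hdn _
          push_cast
          omega
    have hex : ∃ t : ℕ, GG hup hdn t ≤ j := by
      refine ⟨(next hup 0 - j).toNat, ?_⟩
      have := decay (next hup 0 - j).toNat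
      omega
    have ht0 := Nat.find_spec hex
    have h0 : Nat.find hex ≠ 0 := by
      intro h
      rw [h] at ht0
      have : GG hup hdn 0 = next hup 0 := rfl
      omega
    obtain ⟨t, ht⟩ := Nat.exists_eq_succ_of_ne_zero h0
    rw [ht] at ht0
    have hgt : ¬ GG hup hdn t ≤ j := Nat.find_min hex (by omega)
    rcases eq_or_lt_of_le ht0 with he | hlt
    · refine ⟨-(t + 1 : ℕ), ?_⟩
      unfold enum
      rw [if_neg (by push_cast; omega)]
      norm_num
      exact he
    · exact absurd hj (prev_max hdn _ _ hlt (by omega))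

noncomputable def zenum : ZEnum Q where
  e := enum hup hdn
  mono := enum_mono hup hdn
  mem := enum_mem hup hdn
  surj := enum_surj hup hdn
  gap := enum_gap hup hdn

end enumconstr

end CFR

namespace CFR2
open CFR

lemma step_translate {k : ℤ → ℤ} (h : ∀ n, k (n + 1) = k n + 1) : ∀ n, k n = n + k 0 := by
  intro n
  induction n using Int.induction_on with
  | zero => omega
  | succ i ih => rw [h]; omega
  | pred i ih =>
      have hh := h (-(i : ℤ) - 1)
      rw [show (-(i:ℤ) - 1 + 1) = -i by ring] at hh
      omega

lemma const_of_step {G : ℤ → ℤ} (h : ∀ d, G (d + 1) = G d) : ∀ d, G d = G 0 := by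
  intro n
  induction n using Int.induction_on with
  | zero => rfl
  | succ i ih => rw [h]; omega
  | pred i ih =>
      have hh := h (-(i : ℤ) - 1)
      rw [show (-(i:ℤ) - 1 + 1) = -i by ring] at hh
      omega

lemma exists_partial_sum (f : ℤ → ℤ) : ∃ u : ℤ → ℤ, u 0 = 0 ∧ ∀ d, u (d + 1) = u d + f d := by
  refine ⟨fun d => (Finset.range d.toNat).sum (fun j => f j) -
    (Finset.range (-d).toNat).sum (fun j => f (-(j + 1 : ℕ))), by norm_num, fun d => ?_⟩
  simp only []
  rcases le_or_gt 0 d with h | h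
  · rw [show (d + 1).toNat = d.toNat + 1 by omega, show (-(d+1)).toNat = 0 by omega,
      show (-d).toNat = 0 by omega, Finset.sum_range_succ]
    have : ((d.toNat : ℤ)) = d := by omega
    rw [this]; ring
  · rw [show (d + 1).toNat = 0 by omega, show d.toNat = 0 by omega,
      show (-d).toNat = (-(d+1)).toNat + 1 by omega, Finset.sum_range_succ]
    have : (((-(d+1)).toNat : ℕ) + 1 : ℤ) = -d := by omega
    rw [show (-(((-(d+1)).toNat : ℕ) + 1 : ℕ) : ℤ) = d by push_cast; omega]
    ring

end CFR2

/-- A standard doubly periodic tableau with respect to `(K, N, a, b)`. -/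
def IsDPT (K N a b : ℤ) (σ : ℤ × ℤ → ℤ) : Prop :=
  Function.Surjective σ ∧
  (∀ x y : ℤ, σ (x + K, y - N) = σ (x, y)) ∧
  (∀ x y : ℤ, σ (x + a, y - b) = σ (x, y) + (a * N - b * K)) ∧
  (∀ x y : ℤ, σ (x, y) < σ (x + 1, y)) ∧
  (∀ x y : ℤ, σ (x, y) < σ (x, y + 1))

open CFR CFR2 in
/-- Realization of content functions: if `C : ℤ → ℤ/Aℤ` satisfies
(1) `C(i+m) = C(i) + B`, and
(2) between any two consecutive occurrences of a value `r` there are unique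
occurrences of `r+1` and of `r−1`,
then there exist `K, N > 0` and `a, b ∈ ℤ` with `N + K = A`, `a + b ≡ B (mod A)`,
`a*N − b*K = m`, and a standard doubly periodic tableau `σ ∈ DPT(K,N,a,b)`
whose content function equals `C`. -/
theorem content_function_realization (m : ℤ) (hm : 0 < m) (A : ℕ) (hA : 0 < A)
    (B : ZMod A) (C : ℤ → ZMod A)
    (h1 : ∀ i : ℤ, C (i + m) = C i + B)
    (h2 : ∀ (r : ZMod A) (i j : ℤ), i < j → C i = r → C j = r →
      (∀ k : ℤ, i < k → k < j → C k ≠ r) →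
      (∃! p : ℤ, i < p ∧ p < j ∧ C p = r + 1) ∧
      (∃! p : ℤ, i < p ∧ p < j ∧ C p = r - 1)) :
    ∃ K N a b : ℤ, 0 < K ∧ 0 < N ∧ N + K = (A : ℤ) ∧
      ((a + b : ℤ) : ZMod A) = B ∧ a * N - b * K = m ∧
      ∃ σ : ℤ × ℤ → ℤ, IsDPT K N a b σ ∧
        ∀ x y : ℤ, C (σ (x, y)) = ((x - y : ℤ) : ZMod A) := by
  -- dispose of the case A = 1
  rcases eq_or_lt_of_le (show 1 ≤ A from hA) with hA1 | hA2
  · exfalso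
    have hsub : ∀ x y : ZMod A, x = y := by
      intro x y
      have : Subsingleton (ZMod A) := by rw [← hA1]; infer_instance
      exact Subsingleton.elim x y
    obtain ⟨hex, -⟩ := h2 (C 0) 0 1 one_pos rfl (hsub _ _) (fun k hk1 hk2 => by omega)
    obtain ⟨p, ⟨hp1, hp2, -⟩, -⟩ := hex
    omega
  haveI : NeZero A := ⟨by omega⟩
  haveI : Fact (1 < A) := ⟨hA2⟩
  have h10 : (1 : ZMod A) ≠ 0 := one_ne_zero
  -- basic periodicity
  have h1' : ∀ i : ℤ, C (i - m) = C i - B := by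
    intro i
    have := h1 (i - m)
    rw [show i - m + m = i by ring] at this
    rw [this]; ring
  have hper : ∀ (i : ℤ) (k : ℕ), C (i + m * k) = C i + k • B := by
    intro i k
    induction k with
    | zero => simp
    | succ k ih =>
        have := h1 (i + m * k)
        rw [show i + m * k + m = i + m * (k + 1 : ℕ) by push_cast; ring] at this
        rw [this, ih, succ_nsmul]; ring
  have hperA : ∀ i : ℤ, C (i + m * A) = C i := by
    intro i
    rw [hper i A]
    have : (A : ℕ) • B = 0 := by
      rw [nsmul_eq_mul, ZMod.natCast_self, zero_mul]
    rw [this, add_zero]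
  have hperA' : ∀ i : ℤ, C (i - m * A) = C i := by
    intro i
    have := hperA (i - m * A)
    rw [show i - m * A + m * A = i by ring] at this
    exact this.symm
  have hperk : ∀ (i : ℤ) (k : ℕ), C (i + m * A * k) = C i := by
    intro i k
    induction k with
    | zero => simp
    | succ k ih =>
        have := hperA (i + m * A * k)
        rw [show i + m * A * k + m * A = i + m * A * (k + 1 : ℕ) by push_cast; ring] at this
        rw [this, ih]
  have hperk' : ∀ (i : ℤ) (k : ℕ), C (i - m * A * k) = C i := by
    intro i k
    have := hperk (i - m * A * k) k
    rw [show i - m * A * k + m * A * k = i by ring] at this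
    exact this.symm
  have hmA : 0 < m * A := by positivity
  -- unboundedness of each fiber
  have hup : ∀ r : ZMod A, (∃ j, C j = r) → ∀ i : ℤ, ∃ j, i < j ∧ C j = r := by
    intro r ⟨j0, hj0⟩ i
    refine ⟨j0 + m * A * ((i + 1 - j0).toNat), ?_, ?_⟩
    · have h1 : ((i + 1 - j0).toNat : ℤ) ≥ i + 1 - j0 := by omega
      have hk0 : (0:ℤ) ≤ ((i + 1 - j0).toNat : ℤ) := by positivity
      nlinarith [mul_le_mul_of_nonneg_right (show (1:ℤ) ≤ m * A by omega) hk0]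
    · rw [hperk]; exact hj0
  have hdn : ∀ r : ZMod A, (∃ j, C j = r) → ∀ i : ℤ, ∃ j, j < i ∧ C j = r := by
    intro r ⟨j0, hj0⟩ i
    refine ⟨j0 - m * A * ((j0 + 1 - i).toNat), ?_, ?_⟩
    · have h1 : ((j0 + 1 - i).toNat : ℤ) ≥ j0 + 1 - i := by omega
      have hk0 : (0:ℤ) ≤ ((j0 + 1 - i).toNat : ℤ) := by positivity
      nlinarith [mul_le_mul_of_nonneg_right (show (1:ℤ) ≤ m * A by omega) hk0]
    · rw [hperk']; exact hj0
  -- surjectivity of C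
  have hne : ∀ r : ZMod A, ∃ j, C j = r := by
    have step : ∀ r : ZMod A, (∃ j, C j = r) → ∃ j, C j = r + 1 := by
      intro r hr
      have hu := hup r hr
      have hpair := (h2 r (next hu 0) (next hu (next hu 0)) (next_lt hu _)
        (next_mem hu 0) (next_mem hu _) (fun k hk1 hk2 => next_min hu _ k hk1 hk2)).1
      obtain ⟨p, ⟨⟨-, -, hp3⟩, -⟩⟩ := hpair
      exact ⟨p, hp3⟩
    have hcn : ∀ n : ℕ, ∃ j, C j = C 0 + n := by
      intro n
      induction n with
      | zero => exact ⟨0, by norm_num⟩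
      | succ n ih =>
          obtain ⟨j, hj⟩ := step (C 0 + n) ih
          exact ⟨j, by rw [hj]; push_cast; ring⟩
    intro r
    obtain ⟨j, hj⟩ := hcn (r - C 0).val
    refine ⟨j, ?_⟩
    rw [hj, ZMod.natCast_rightInverse (r - C 0)]
    ring
  -- the enumerations
  have E : ∀ r : ZMod A, ZEnum (fun i => C i = r) := fun r =>
    zenum (hup r (hne r)) (hdn r (hne r))
  have hEr : ∀ (r : ZMod A) (ρ : ZMod A) (n : ℤ), ρ = r → C ((E r).e n) = ρ := by
    intro r ρ n h; rw [h]; exact (E r).mem n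
  -- interlacing shifts
  have hs : ∃ s : ZMod A → ℤ, ∀ (r : ZMod A) (n : ℤ),
      ((E r).e n < (E (r+1)).e (n + s r) ∧ (E (r+1)).e (n + s r) < (E r).e (n + 1)) ∧
      (∀ q : ℤ, (E r).e n < q → q < (E r).e (n + 1) → C q = r + 1 → q = (E (r+1)).e (n + s r)) := by
    have hex : ∀ (r : ZMod A) (n : ℤ), ∃ p : ℤ,
        ((E r).e n < p ∧ p < (E r).e (n+1) ∧ C p = r + 1) ∧
        ∀ q : ℤ, ((E r).e n < q ∧ q < (E r).e (n+1) ∧ C q = r + 1) → q = p := by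
      intro r n
      exact (h2 r ((E r).e n) ((E r).e (n+1)) ((E r).mono (by omega)) ((E r).mem n)
        ((E r).mem (n+1)) (fun k hk1 hk2 => (E r).gap n k hk1 hk2)).1
    choose p hp hpu using hex
    have hidx : ∀ (r : ZMod A) (n : ℤ), ∃ k, (E (r+1)).e k = p r n :=
      fun r n => (E (r+1)).surj _ (hp r n).2.2
    choose idx hidx using hidx
    have hr1r : ∀ r : ZMod A, r + 1 ≠ r := by
      intro r h
      exact h10 (by rwa [add_eq_left] at h)
    have kstep : ∀ (r : ZMod A) (n : ℤ), idx r (n + 1) = idx r n + 1 := by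
      intro r n
      have hlt : p r n < p r (n+1) := lt_trans (hp r n).2.1 (hp r (n+1)).1
      have hmono : idx r n < idx r (n+1) :=
        (E (r+1)).mono.lt_iff_lt.1 (by rw [hidx, hidx]; exact hlt)
      by_contra hcon
      have hge : idx r n + 1 < idx r (n+1) := by omega
      have hq1 : p r n < (E (r+1)).e (idx r n + 1) := by
        rw [← hidx r n]; exact (E (r+1)).mono (by omega)
      have hq2 : (E (r+1)).e (idx r n + 1) < p r (n+1) := by
        rw [← hidx r (n+1)]; exact (E (r+1)).mono hge
      have hqC : C ((E (r+1)).e (idx r n + 1)) = r + 1 := (E (r+1)).mem _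
      rcases lt_trichotomy ((E (r+1)).e (idx r n + 1)) ((E r).e (n+1)) with hlt2 | heq | hgt
      · have := hpu r n _ ⟨lt_trans (hp r n).1 hq1, hlt2, hqC⟩
        omega
      · exact hr1r r (by rw [← hqC, heq]; exact (E r).mem (n+1))
      · have h5 : (E (r+1)).e (idx r n + 1) < (E r).e (n+1+1) :=
          lt_trans hq2 (hp r (n+1)).2.1
        have := hpu r (n+1) _ ⟨hgt, h5, hqC⟩
        omega
    have kform : ∀ (r : ZMod A) (n : ℤ), idx r n = n + idx r 0 :=
      fun r => step_translate (kstep r)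
    refine ⟨fun r => idx r 0, fun r n => ⟨?_, ?_⟩⟩
    · have he : (E (r+1)).e (n + idx r 0) = p r n := by rw [← kform r n, hidx]
      rw [he]
      exact ⟨(hp r n).1, (hp r n).2.1⟩
    · intro q hq1 hq2 hq3
      have he : (E (r+1)).e (n + idx r 0) = p r n := by rw [← kform r n, hidx]
      rw [he]
      exact hpu r n q ⟨hq1, hq2, hq3⟩
  obtain ⟨s, hs⟩ := hs
  -- uniqueness of the interlacing shift
  have hsu : ∀ (r : ZMod A) (s' : ℤ),
      (∀ n, (E r).e n < (E (r+1)).e (n + s') ∧ (E (r+1)).e (n + s') < (E r).e (n + 1)) →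
      s' = s r := by
    intro r s' h
    have h0 := h 0
    have := (hs r 0).2 ((E (r+1)).e (0 + s')) h0.1 h0.2 ((E (r+1)).mem _)
    have := (E (r+1)).mono.injective this
    omega
  -- range of an enumeration
  have hrange : ∀ r : ZMod A, Set.range (E r).e = {i | C i = r} := by
    intro r
    ext i
    constructor
    · rintro ⟨n, rfl⟩; exact (E r).mem n
    · intro hi; exact (E r).surj i hi
  -- the m-shift indices
  have ht : ∃ t : ZMod A → ℤ, ∀ (r : ZMod A) (n : ℤ),
      (E (r + B)).e (n + t r) = (E r).e n + m := by
    have hex : ∀ r : ZMod A, ∃ tr : ℤ, ∀ n, (E (r + B)).e (n + tr) = (E r).e n + m := by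
      intro r
      have hg : StrictMono (fun n => (E r).e n + m) := by
        intro x y hxy
        have := (E r).mono hxy
        dsimp only
        omega
      refine exists_shift (E (r + B)).mono hg ?_
      rw [hrange]
      ext i
      simp only [Set.mem_range, Set.mem_setOf_eq]
      constructor
      · intro hi
        have h := h1' i
        rw [hi] at h
        have h2' : C (i - m) = r := by rw [h]; ring
        obtain ⟨n, hn⟩ := (E r).surj _ h2'
        exact ⟨n, by omega⟩
      · rintro ⟨n, hn⟩
        rw [← hn]
        have h := h1 ((E r).e n)
        rw [(E r).mem n] at h
        exact h
    choose t ht using hex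
    exact ⟨t, ht⟩
  obtain ⟨t, ht⟩ := ht
  -- the (m*A)-shift indices
  have hP : ∃ P : ZMod A → ℤ, ∀ (r : ZMod A) (n : ℤ),
      (E r).e (n + P r) = (E r).e n + m * A := by
    have hex : ∀ r : ZMod A, ∃ pr : ℤ, ∀ n, (E r).e (n + pr) = (E r).e n + m * A := by
      intro r
      have hg : StrictMono (fun n => (E r).e n + m * A) := by
        intro x y hxy
        have := (E r).mono hxy
        dsimp only
        omega
      refine exists_shift (E r).mono hg ?_
      rw [hrange]
      ext i
      simp only [Set.mem_range, Set.mem_setOf_eq]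
      constructor
      · intro hi
        have h := hperA' i
        rw [hi] at h
        obtain ⟨n, hn⟩ := (E r).surj _ h
        exact ⟨n, by omega⟩
      · rintro ⟨n, hn⟩
        rw [← hn]
        have h := hperA ((E r).e n)
        rw [(E r).mem n] at h
        exact h
    choose P hP using hex
    exact ⟨P, hP⟩
  obtain ⟨P, hP⟩ := hP
  have hPpos : ∀ r, 0 < P r := by
    intro r
    have := hP r 0
    have h2' : (E r).e 0 < (E r).e (0 + P r) := by omega
    have := (E r).mono.lt_iff_lt.1 h2'
    omega
  -- step relations
  have tstep : ∀ r : ZMod A, t (r + 1) = t r + s (r + B) - s r := by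
    intro r
    have key : ∀ k : ℤ, (E (r + B)).e k < (E (r + B + 1)).e (k + (s r + t (r+1) - t r)) ∧
        (E (r + B + 1)).e (k + (s r + t (r+1) - t r)) < (E (r + B)).e (k + 1) := by
      intro k
      have h0 := (hs r (k - t r)).1
      have e1 := ht r (k - t r)
      rw [show k - t r + t r = k by ring] at e1
      have e2 := ht r (k - t r + 1)
      rw [show k - t r + 1 + t r = k + 1 by ring] at e2
      have e3 := ht (r + 1) (k - t r + s r)
      rw [show r + 1 + B = r + B + 1 by ring,
        show k - t r + s r + t (r + 1) = k + (s r + t (r+1) - t r) by ring] at e3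
      omega
    have := hsu (r + B) _ (fun n => key n)
    omega
  have Pstep : ∀ r : ZMod A, P (r + 1) = P r := by
    intro r
    have key : ∀ k : ℤ, (E r).e k < (E (r + 1)).e (k + (s r + P (r+1) - P r)) ∧
        (E (r + 1)).e (k + (s r + P (r+1) - P r)) < (E r).e (k + 1) := by
      intro k
      have h0 := (hs r (k - P r)).1
      have e1 := hP r (k - P r)
      rw [show k - P r + P r = k by ring] at e1
      have e2 := hP r (k - P r + 1)
      rw [show k - P r + 1 + P r = k + 1 by ring] at e2
      have e3 := hP (r + 1) (k - P r + s r)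
      rw [show k - P r + s r + P (r + 1) = k + (s r + P (r+1) - P r) by ring] at e3
      omega
    have := hsu r _ (fun n => key n)
    omega
  have Pconst : ∀ r : ZMod A, P r = P 0 := by
    have hnat : ∀ n : ℕ, P ((n : ZMod A)) = P 0 := by
      intro n
      induction n with
      | zero => norm_num
      | succ n ih =>
          push_cast
          rw [Pstep]
          exact ih
    intro r
    have := hnat r.val
    rwa [ZMod.natCast_rightInverse r] at this
  -- counting: P 0 = m
  have Pm : P 0 = m := by
    have cntstep : ∀ (r : ZMod A) (x : ℤ),
        (((Finset.Ico (x+1) (x + 1 + m * A)).filter (fun i => C i = r)).card : ℤ)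
          = (((Finset.Ico x (x + m * A)).filter (fun i => C i = r)).card : ℤ) := by
      intro r x
      have hico1 : Finset.Ico x (x + m * A) = Finset.Ico x (x+1) ∪ Finset.Ico (x+1) (x + m * A) :=
        (Finset.Ico_union_Ico_eq_Ico (by omega) (by omega)).symm
      have hico2 : Finset.Ico (x+1) (x + 1 + m * A)
          = Finset.Ico (x+1) (x + m * A) ∪ Finset.Ico (x + m * A) (x + 1 + m * A) :=
        (Finset.Ico_union_Ico_eq_Ico (by omega) (by omega)).symm
      have d1 : Disjoint (Finset.Ico x (x+1)) (Finset.Ico (x+1) (x + m*A)) :=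
        Finset.Ico_disjoint_Ico_consecutive _ _ _
      have d2 : Disjoint (Finset.Ico (x+1) (x + m*A)) (Finset.Ico (x + m*A) (x + 1 + m*A)) :=
        Finset.Ico_disjoint_Ico_consecutive _ _ _
      have hs1 : Finset.Ico x (x+1) = {x} := by
        ext i; simp only [Finset.mem_Ico, Finset.mem_singleton]; omega
      have hs2 : Finset.Ico (x + m*A) (x + 1 + m*A) = {x + m*A} := by
        ext i; simp only [Finset.mem_Ico, Finset.mem_singleton]; omega
      rw [hico2, hico1, Finset.filter_union, Finset.filter_union,
        Finset.card_union_of_disjoint (Finset.disjoint_filter_filter d1),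
        Finset.card_union_of_disjoint (Finset.disjoint_filter_filter d2),
        hs1, hs2, Finset.filter_singleton, Finset.filter_singleton]
      have hCeq : C (x + m * A) = C x := hperA x
      by_cases hC : C x = r
      · rw [if_pos hC, if_pos (by rw [hCeq]; exact hC)]
        simp only [Finset.card_singleton, Finset.card_empty]
        push_cast; ring
      · rw [if_neg hC, if_neg (by rw [hCeq]; exact hC)]
        simp only [Finset.card_singleton, Finset.card_empty]
        push_cast; ring
    have cntconst : ∀ (r : ZMod A) (x : ℤ),
        (((Finset.Ico x (x + m * A)).filter (fun i => C i = r)).card : ℤ)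
          = (((Finset.Ico (0:ℤ) (0 + m * A)).filter (fun i => C i = r)).card : ℤ) :=
      fun r => const_of_step
        (G := fun x => (((Finset.Ico x (x + m*A)).filter (fun i => C i = r)).card : ℤ))
        (fun d => cntstep r d)
    have cntP : ∀ r : ZMod A,
        (((Finset.Ico ((E r).e 0) ((E r).e 0 + m * A)).filter (fun i => C i = r)).card : ℤ)
          = P r := by
      intro r
      have hend : (E r).e 0 + m * A = (E r).e (P r) := by
        have := hP r 0; rw [zero_add] at this; omega
      have hinj : Function.Injective (fun k : ℕ => (E r).e (k : ℤ)) := by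
        intro a b hab
        have := (E r).mono.injective hab
        omega
      have himg : (Finset.Ico ((E r).e 0) ((E r).e 0 + m*A)).filter (fun i => C i = r)
          = (Finset.range (P r).toNat).image (fun k : ℕ => (E r).e (k : ℤ)) := by
        ext i
        simp only [Finset.mem_filter, Finset.mem_Ico, Finset.mem_image, Finset.mem_range]
        constructor
        · rintro ⟨⟨hi1, hi2⟩, hiC⟩
          obtain ⟨n, hn⟩ := (E r).surj i hiC
          have hn1 : (0:ℤ) ≤ n := by
            by_contra hcon
            have := (E r).mono (show n < 0 by omega)
            omega
          have hn2 : n < P r := by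
            rw [hend, ← hn] at hi2
            exact (E r).mono.lt_iff_lt.1 hi2
          exact ⟨n.toNat, by omega, by rw [show ((n.toNat : ℤ)) = n by omega]; exact hn⟩
        · rintro ⟨k, hk, hke⟩
          rw [← hke]
          refine ⟨⟨?_, ?_⟩, (E r).mem _⟩
          · rcases eq_or_lt_of_le (show (0:ℤ) ≤ (k:ℤ) by positivity) with h | h
            · rw [← h]
            · exact le_of_lt ((E r).mono h)
          · rw [hend]
            exact (E r).mono (by omega)
      rw [himg, Finset.card_image_of_injective _ hinj, Finset.card_range]
      have := hPpos r
      omega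
    have htot : ((Finset.Ico (0:ℤ) (0 + m * A)).card : ℤ)
        = ∑ r : ZMod A, (((Finset.Ico (0:ℤ) (0 + m * A)).filter (fun i => C i = r)).card : ℤ) := by
      rw [Finset.card_eq_sum_card_fiberwise (f := C) (t := Finset.univ)
        (fun x _ => Finset.mem_univ (C x))]
      push_cast
      rfl
    have hcardIco : ((Finset.Ico (0:ℤ) (0 + m * A)).card : ℤ) = m * A := by
      rw [Int.card_Ico]
      omega
    have hsum : ∑ r : ZMod A, (((Finset.Ico (0:ℤ) (0 + m*A)).filter (fun i => C i = r)).card : ℤ)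
        = (A:ℤ) * P 0 := by
      have heach : ∀ r : ZMod A,
          (((Finset.Ico (0:ℤ) (0+m*A)).filter (fun i => C i = r)).card : ℤ) = P 0 :=
        fun r => ((cntconst r ((E r).e 0)).symm.trans (cntP r)).trans (Pconst r)
      rw [Finset.sum_congr rfl (fun r _ => heach r), Finset.sum_const, Finset.card_univ, ZMod.card]
      ring
    have hfin : m * (A:ℤ) = (A:ℤ) * P 0 := by rw [← hsum, ← htot, hcardIco]
    have hAne : (A:ℤ) ≠ 0 := by omega
    refine mul_left_cancel₀ hAne ?_
    linarith [hfin]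
  -- partial sums of s along diagonals
  obtain ⟨u, hu0, hustep⟩ := exists_partial_sum (fun d => s ((d : ZMod A)))
  set Sig : ℤ := u (A : ℤ) with hSig
  have hcastA : (((A : ℤ) : ℤ) : ZMod A) = 0 := by push_cast; exact_mod_cast ZMod.natCast_self A
  have hcastadd : ∀ d : ℤ, ((d + (A:ℤ) : ℤ) : ZMod A) = ((d : ZMod A)) := by
    intro d; push_cast [ZMod.natCast_self]; ring
  have uper : ∀ d : ℤ, u (d + (A : ℤ)) = u d + Sig := by
    have hstep : ∀ d : ℤ, u (d + 1 + (A:ℤ)) - u (d + 1) = u (d + (A:ℤ)) - u d := by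
      intro d
      have e1 := hustep (d + (A:ℤ))
      rw [show d + (A:ℤ) + 1 = d + 1 + (A:ℤ) by ring] at e1
      have e2 := hustep d
      have e3 : (((d + (A:ℤ)) : ℤ) : ZMod A) = ((d : ℤ) : ZMod A) := hcastadd d
      rw [e3] at e1
      omega
    have hconst := const_of_step (G := fun d => u (d + (A:ℤ)) - u d) hstep
    intro d
    have h0 := hconst d
    simp only [zero_add, hu0] at h0
    omega
  -- diagonal interlacing
  have ILd : ∀ d n : ℤ, (E ((d : ZMod A))).e n < (E (((d+1 : ℤ) : ZMod A))).e (n + s ((d : ZMod A)))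
      ∧ (E (((d+1 : ℤ) : ZMod A))).e (n + s ((d : ZMod A))) < (E ((d : ZMod A))).e (n + 1) := by
    intro d n
    have h := (hs ((d : ZMod A)) n).1
    have : (((d+1 : ℤ) : ZMod A)) = ((d : ZMod A)) + 1 := by push_cast; ring
    rw [this]
    exact h
  -- 0 < Sig < A
  have hSigpos : 0 < Sig := by
    have L : ∀ d : ℤ, 0 ≤ d → ∀ n : ℤ,
        (E (((0:ℤ) : ZMod A))).e n < (E (((d + 1 : ℤ) : ZMod A))).e (n + u (d + 1)) := by
      intro d hd
      refine Int.le_induction (motive := fun d _ => ∀ n : ℤ,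
        (E (((0:ℤ) : ZMod A))).e n < (E (((d + 1 : ℤ) : ZMod A))).e (n + u (d + 1))) ?_ ?_ d hd
      · intro n
        rw [hustep 0, hu0]
        simpa using (ILd 0 n).1
      · intro d hd ih n
        rw [hustep (d+1), show n + (u (d+1) + s (((d + 1 : ℤ) : ZMod A)))
          = (n + u (d+1)) + s (((d + 1 : ℤ) : ZMod A)) by ring]
        exact lt_trans (ih n) (ILd (d+1) (n + u (d+1))).1
    have hL := L ((A:ℤ) - 1) (by omega) 0
    rw [show (A:ℤ) - 1 + 1 = (A:ℤ) by ring,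
      show (((A:ℤ) : ℤ) : ZMod A) = (((0:ℤ)) : ZMod A) by rw [hcastA]; norm_num] at hL
    have := (E (((0:ℤ) : ZMod A))).mono.lt_iff_lt.1 hL
    omega
  have hSiglt : Sig < (A : ℤ) := by
    have H : ∀ d : ℤ, 0 ≤ d → ∀ n : ℤ,
        (E (((d + 1 : ℤ) : ZMod A))).e (n + u (d + 1)) < (E (((0:ℤ) : ZMod A))).e (n + (d + 1)) := by
      intro d hd
      refine Int.le_induction (motive := fun d _ => ∀ n : ℤ,
        (E (((d + 1 : ℤ) : ZMod A))).e (n + u (d + 1)) < (E (((0:ℤ) : ZMod A))).e (n + (d + 1))) ?_ ?_ d hd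
      · intro n
        rw [hustep 0, hu0]
        simpa using (ILd 0 n).2
      · intro d hd ih n
        rw [hustep (d+1), show n + (u (d+1) + s (((d + 1 : ℤ) : ZMod A)))
          = (n + u (d+1)) + s (((d + 1 : ℤ) : ZMod A)) by ring]
        refine lt_trans (ILd (d+1) (n + u (d+1))).2 ?_
        have h3 := ih (n + 1)
        rw [show n + 1 + u (d+1) = n + u (d+1) + 1 by ring] at h3
        rw [show n + (d + 1 + 1) = n + 1 + (d + 1) by ring]
        exact h3
    have hH := H ((A:ℤ) - 1) (by omega) 0
    rw [show (A:ℤ) - 1 + 1 = (A:ℤ) by ring,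
      show (((A:ℤ) : ℤ) : ZMod A) = (((0:ℤ)) : ZMod A) by rw [hcastA]; norm_num] at hH
    have := (E (((0:ℤ) : ZMod A))).mono.lt_iff_lt.1 hH
    omega
  -- the lift of B
  set β : ℤ := (B.val : ℤ) with hβ
  have hβcast : ((β : ℤ) : ZMod A) = B := by
    rw [hβ]; push_cast; exact ZMod.natCast_rightInverse B
  have hβnn : 0 ≤ β := by rw [hβ]; positivity
  -- formula for t along diagonals
  have tform : ∀ d : ℤ, t ((d : ZMod A)) = t ((0:ℤ) : ZMod A) + u (d + β) - u β - u d := by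
    have hstep : ∀ d : ℤ, t (((d + 1 : ℤ) : ZMod A)) - u ((d + 1) + β) + u (d + 1)
        = t ((d : ZMod A)) - u (d + β) + u d := by
      intro d
      have ts := tstep ((d : ZMod A))
      have hc1 : (((d + 1 : ℤ)) : ZMod A) = ((d : ZMod A)) + 1 := by push_cast; ring
      have hc2 : (((d + β : ℤ)) : ZMod A) = ((d : ZMod A)) + B := by push_cast [hβcast]; ring
      have e1 := hustep (d + β)
      rw [hc2] at e1
      have e2 := hustep d
      rw [hc1, show (d + 1) + β = (d + β) + 1 by ring]
      omega
    have hG := const_of_step (G := fun d => t ((d : ZMod A)) - u (d + β) + u d) hstep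
    intro d
    have h1 : t ((d : ZMod A)) - u (d + β) + u d
        = t (((0:ℤ)) : ZMod A) - u (0 + β) + u 0 := hG d
    rw [zero_add, hu0] at h1
    omega
  -- the walk sum identity : m = A * (t 0 - u β) + β * Sig
  have hkey : m = (A : ℤ) * (t ((0:ℤ) : ZMod A) - u β) + β * Sig := by
    have walk : ∀ k : ℕ, ∀ n : ℤ,
        (E ((((k:ℤ) * β : ℤ)) : ZMod A)).e (n + ∑ j ∈ Finset.range k, t ((((j:ℤ) * β : ℤ)) : ZMod A))
          = (E (((0:ℤ)) : ZMod A)).e n + (k:ℤ) * m := by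
      intro k
      induction k with
      | zero =>
          intro n
          rw [show (((0:ℕ):ℤ) * β : ℤ) = (0:ℤ) by norm_num]
          norm_num
      | succ k ih =>
          intro n
          have hh := ht ((((k:ℤ) * β : ℤ)) : ZMod A)
            (n + ∑ j ∈ Finset.range k, t ((((j:ℤ) * β : ℤ)) : ZMod A))
          rw [ih n] at hh
          rw [Finset.sum_range_succ,
            show ((((k+1:ℕ):ℤ) * β : ℤ) : ZMod A) = ((((k:ℤ) * β : ℤ)) : ZMod A) + B by
              push_cast [hβcast]; ring,
            show n + ((∑ j ∈ Finset.range k, t ((((j:ℤ) * β : ℤ)) : ZMod A)) + t ((((k:ℤ) * β : ℤ)) : ZMod A))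
              = (n + ∑ j ∈ Finset.range k, t ((((j:ℤ) * β : ℤ)) : ZMod A)) + t ((((k:ℤ) * β : ℤ)) : ZMod A) by ring,
            hh]
          push_cast
          ring
    have wA := walk A 0
    rw [show ((((A:ℕ):ℤ) * β : ℤ) : ZMod A) = (((0:ℤ)) : ZMod A) by
      push_cast [ZMod.natCast_self]; ring] at wA
    have hPA := hP ((((0:ℤ)) : ZMod A)) 0
    have hring : (A:ℤ) * m = m * (A:ℤ) := by ring
    have heq : (E ((((0:ℤ)) : ZMod A))).e (0 + ∑ j ∈ Finset.range A, t ((((j:ℤ) * β : ℤ)) : ZMod A))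
        = (E ((((0:ℤ)) : ZMod A))).e (0 + P ((((0:ℤ)) : ZMod A))) := by omega
    have hTA := (E ((((0:ℤ)) : ZMod A))).mono.injective heq
    have hPz := Pconst ((((0:ℤ)) : ZMod A))
    have tele : ∀ K : ℕ, ∑ j ∈ Finset.range K, t ((((j:ℤ) * β : ℤ)) : ZMod A)
        = (K:ℤ) * (t (((0:ℤ)) : ZMod A) - u β) + u ((K:ℤ) * β) := by
      intro K
      induction K with
      | zero => norm_num [hu0]
      | succ K ih =>
          rw [Finset.sum_range_succ, ih, tform ((K:ℤ) * β),
            show (K:ℤ) * β + β = (((K+1:ℕ):ℤ)) * β by push_cast; ring]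
          push_cast
          ring
    have umul : ∀ k : ℕ, u ((k:ℤ) * (A:ℤ)) = (k:ℤ) * Sig := by
      intro k
      induction k with
      | zero => norm_num [hu0]
      | succ k ih =>
          rw [show ((k+1:ℕ):ℤ) * (A:ℤ) = (k:ℤ) * (A:ℤ) + (A:ℤ) by push_cast; ring, uper, ih]
          push_cast
          ring
    have hAβ : u ((A:ℤ) * β) = β * Sig := by
      rw [show (A:ℤ) * β = ((B.val : ℕ):ℤ) * (A:ℤ) by rw [hβ]; ring, umul B.val, ← hβ]
    have hteleA := tele A
    rw [hAβ] at hteleA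
    omega
  -- final assembly
  refine ⟨(A : ℤ) - Sig, Sig, β - (u β - t ((0:ℤ) : ZMod A)), u β - t ((0:ℤ) : ZMod A),
    by omega, hSigpos, by ring, ?_, ?_, ?_⟩
  · rw [show β - (u β - t ((0:ℤ) : ZMod A)) + (u β - t ((0:ℤ) : ZMod A)) = β by ring]
    exact hβcast
  · ring_nf
    ring_nf at hkey
    linarith
  · refine ⟨fun q => (E (((q.1 - q.2 : ℤ) : ZMod A))).e (q.2 + u (q.1 - q.2)), ⟨?_, ?_, ?_, ?_, ?_⟩, ?_⟩
    -- surjectivity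
    · intro i
      obtain ⟨n, hn⟩ := (E (C i)).surj i rfl
      refine ⟨(((C i).val : ℤ) + (n - u (((C i).val : ℤ))), n - u (((C i).val : ℤ))), ?_⟩
      dsimp only
      rw [show ((C i).val : ℤ) + (n - u (((C i).val : ℤ))) - (n - u (((C i).val : ℤ)))
        = ((C i).val : ℤ) by ring]
      rw [show ((((C i).val : ℤ)) : ZMod A) = C i by
        push_cast; exact ZMod.natCast_rightInverse (C i)]
      rw [show n - u (((C i).val : ℤ)) + u (((C i).val : ℤ)) = n by ring]
      exact hn
    -- (K, -N) periodicity
    · intro x y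
      dsimp only
      rw [show x + ((A:ℤ) - Sig) - (y - Sig) = (x - y) + (A:ℤ) by ring]
      rw [hcastadd (x - y)]
      rw [show y - Sig + u ((x - y) + (A:ℤ)) = y + u (x - y) from by
        have := uper (x - y); omega]
    -- (a, -b) periodicity
    · intro x y
      dsimp only
      rw [show (β - (u β - t (((0:ℤ)) : ZMod A))) * Sig
          - (u β - t (((0:ℤ)) : ZMod A)) * ((A:ℤ) - Sig) = m from by
        ring_nf; ring_nf at hkey; linarith]
      rw [show x + (β - (u β - t (((0:ℤ)) : ZMod A))) - (y - (u β - t (((0:ℤ)) : ZMod A)))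
        = (x - y) + β by ring]
      rw [show (((x - y) + β : ℤ) : ZMod A) = (((x - y : ℤ)) : ZMod A) + B from by
        push_cast [hβcast]; ring]
      rw [show y - (u β - t (((0:ℤ)) : ZMod A)) + u ((x - y) + β)
          = (y + u (x - y)) + t (((x - y : ℤ)) : ZMod A) from by
        have := tform (x - y); omega]
      exact ht _ _
    -- rows increase
    · intro x y
      dsimp only
      rw [show x + 1 - y = (x - y) + 1 by ring]
      rw [show y + u ((x - y) + 1) = (y + u (x - y)) + s (((x - y : ℤ)) : ZMod A) from by
        have := hustep (x - y); omega]
      exact (ILd (x - y) (y + u (x - y))).1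
    -- columns increase
    · intro x y
      dsimp only
      have h := (ILd ((x - y) - 1) (y + u ((x - y) - 1))).2
      rw [show (x - y) - 1 + 1 = x - y by ring] at h
      have hix : y + u ((x - y) - 1) + s ((((x - y) - 1 : ℤ)) : ZMod A) = y + u (x - y) := by
        have h2' := hustep ((x - y) - 1)
        rw [show (x - y) - 1 + 1 = x - y by ring] at h2'
        omega
      rw [hix] at h
      rw [show x - (y + 1) = (x - y) - 1 by ring,
        show (y + 1) + u ((x - y) - 1) = y + u ((x - y) - 1) + 1 by ring]
      exact h
    -- contents
    · intro x y
      exact (E (((x - y : ℤ)) : ZMod A)).mem (y + u (x - y))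
end

section
/- Fix integers K, N > 0 and a, b with m = a*N − b*K > 0. If σ, τ ∈ DPT(K,N,a,b) satisfy deg(σ) = deg(τ) and C_σ = C_τ, then σ = τ. -/
namespace DPTUnique

/-- Context: one tableau together with a content function. -/
structure Ctx (K : ℤ) (N : ℕ) where
  f : ℤ × ℤ → ℤ
  c : ℤ → ℤ
  surj : Function.Surjective f
  per : ∀ x y : ℤ, f (x + K, y - (N : ℤ)) = f (x, y)
  row : ∀ x y : ℤ, f (x, y) < f (x + 1, y)
  col : ∀ x y : ℤ, f (x, y) < f (x, y + 1)
  cont : ∀ x y : ℤ, ((N : ℤ) + K) ∣ (x - y - c (f (x, y)))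

namespace Ctx

variable {K : ℤ} {N : ℕ} (D : Ctx K N)

lemma row_monoNat (x y : ℤ) : ∀ k : ℕ, D.f (x, y) + k ≤ D.f (x + k, y) := by
  intro k
  induction k with
  | zero => simp
  | succ k ih =>
      have h := D.row (x + (k : ℤ)) y
      rw [show x + ((k : ℕ) + 1 : ℕ) = (x + (k : ℤ)) + 1 by push_cast; ring]
      push_cast
      omega

lemma row_mono (x y k : ℤ) (hk : 0 ≤ k) : D.f (x, y) + k ≤ D.f (x + k, y) := by
  have h := D.row_monoNat x y k.toNat
  rw [Int.toNat_of_nonneg hk] at h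
  exact h

lemma setA_nonempty (i y : ℤ) : {x : ℤ | i ≤ D.f (x, y)}.Nonempty := by
  refine ⟨max 0 (i - D.f (0, y)), ?_⟩
  have h := D.row_mono 0 y (max 0 (i - D.f (0, y))) (le_max_left _ _)
  simp only [Set.mem_setOf_eq, zero_add] at h ⊢
  have := le_max_right 0 (i - D.f (0, y))
  omega

lemma setA_bdd (i y : ℤ) : BddBelow {x : ℤ | i ≤ D.f (x, y)} := by
  refine ⟨min 0 (i - D.f (0, y)), fun x hx => ?_⟩
  simp only [Set.mem_setOf_eq] at hx
  rcases le_or_gt 0 x with h | h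
  · exact le_trans (min_le_left _ _) h
  · have hm := D.row_mono x y (-x) (by omega)
    rw [show x + -x = 0 by ring] at hm
    have : i - D.f (0, y) ≤ x := by omega
    exact le_trans (min_le_right _ _) this

/-- `A i y` : least `x` with `i ≤ f (x, y)`. -/
noncomputable def A (i y : ℤ) : ℤ := sInf {x : ℤ | i ≤ D.f (x, y)}

lemma A_mem (i y : ℤ) : i ≤ D.f (D.A i y, y) :=
  Int.csInf_mem (D.setA_nonempty i y) (D.setA_bdd i y)

lemma A_le {i x y : ℤ} (h : i ≤ D.f (x, y)) : D.A i y ≤ x :=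
  csInf_le (D.setA_bdd i y) h

lemma le_of_A_le {i x y : ℤ} (h : D.A i y ≤ x) : i ≤ D.f (x, y) := by
  have h0 := D.A_mem i y
  have h1 := D.row_mono (D.A i y) y (x - D.A i y) (by omega)
  rw [show D.A i y + (x - D.A i y) = x by ring] at h1
  omega

lemma A_iff (i x y : ℤ) : i ≤ D.f (x, y) ↔ D.A i y ≤ x :=
  ⟨D.A_le, D.le_of_A_le⟩

lemma lt_A_iff (i x y : ℤ) : D.f (x, y) < i ↔ x < D.A i y := by
  rw [← not_le, ← not_le, D.A_iff]

lemma A_succ_le (i y : ℤ) : D.A (i + 1) y ≤ D.A i y + 1 := by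
  apply D.A_le
  have h1 := D.A_mem i y
  have h2 := D.row (D.A i y) y
  omega

lemma A_le_succ (i y : ℤ) : D.A i y ≤ D.A (i + 1) y := by
  apply D.A_le
  have := D.A_mem (i + 1) y
  omega

lemma A_col (i y : ℤ) : D.A i (y + 1) ≤ D.A i y := by
  apply D.A_le
  have h1 := D.A_mem i y
  have h2 := D.col (D.A i y) y
  omega

lemma f_shift (x y : ℤ) : D.f (x, y + (N : ℤ)) = D.f (x + K, y) := by
  have h := D.per x (y + (N : ℤ))
  rw [show y + (N : ℤ) - (N : ℤ) = y by ring] at h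
  exact h.symm

lemma A_perN (i y : ℤ) : D.A i (y + (N : ℤ)) = D.A i y - K := by
  have h1 : D.A i (y + (N : ℤ)) ≤ D.A i y - K := by
    apply D.A_le
    rw [D.f_shift, show D.A i y - K + K = D.A i y by ring]
    exact D.A_mem i y
  have h2 : D.A i y ≤ D.A i (y + (N : ℤ)) + K := by
    apply D.A_le
    rw [← D.f_shift]
    exact D.A_mem i (y + (N : ℤ))
  omega

lemma A_perZ (i y q : ℤ) : D.A i (y + q * (N : ℤ)) = D.A i y - q * K := by
  induction q using Int.induction_on with
  | zero => simp
  | succ k ih =>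
      have h := D.A_perN i (y + (k : ℤ) * (N : ℤ))
      rw [show y + ((k : ℤ) + 1) * (N : ℤ) = y + (k : ℤ) * (N : ℤ) + (N : ℤ) by ring, h, ih]
      ring
  | pred k ih =>
      have h := D.A_perN i (y + (-(k : ℤ) - 1) * (N : ℤ))
      rw [show y + (-(k : ℤ) - 1) * (N : ℤ) + (N : ℤ) = y + (-(k : ℤ)) * (N : ℤ) by ring] at h
      rw [ih] at h
      rw [show (-(k:ℤ)-1) * K = -(k:ℤ)*K - K by ring]
      omega

/-- Diagonal position of the vertical boundary step in row `y` at level `i`. -/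
noncomputable def p (i y : ℤ) : ℤ := D.A i y - y

lemma p_col (i y : ℤ) : D.p i (y + 1) ≤ D.p i y - 1 := by
  have := D.A_col i y
  unfold p
  omega

lemma p_mono (i y : ℤ) : ∀ k : ℤ, 0 ≤ k → D.p i (y + k) ≤ D.p i y - k := by
  intro k hk
  refine Int.le_induction (motive := fun k _ => D.p i (y + k) ≤ D.p i y - k) (by simp) (fun k hk ih => ?_) k hk
  have h := D.p_col i (y + k)
  show D.p i (y + (k + 1)) ≤ D.p i y - (k + 1)
  rw [show y + (k + 1) = y + k + 1 by ring]
  beta_reduce at ih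
  omega

lemma p_lt {i y y' : ℤ} (h : y < y') : D.p i y' < D.p i y := by
  have := D.p_mono i y (y' - y) (by omega)
  rw [show y + (y' - y) = y' by ring] at this
  omega

lemma p_antitone {i y y' : ℤ} (h : y ≤ y') : D.p i y' ≤ D.p i y := by
  rcases eq_or_lt_of_le h with rfl | h'
  · exact le_refl _
  · exact le_of_lt (D.p_lt h')

lemma p_lt_rev {i y y' : ℤ} (h : D.p i y' < D.p i y) : y < y' := by
  by_contra h'
  push_neg at h'
  exact absurd (D.p_antitone (i := i) h') (by omega)

lemma p_perZ (i y q : ℤ) : D.p i (y + q * (N : ℤ)) = D.p i y - q * ((N : ℤ) + K) := by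
  have := D.A_perZ i y q
  unfold p
  rw [this]
  ring

variable (hK : 0 < K) (hN : 0 < N)

include hK hN in
lemma p_inj_mod {i y y' : ℤ} (h : ((N : ℤ) + K) ∣ (D.p i y - D.p i y')) :
    ((N : ℤ)) ∣ (y' - y) := by
  set n : ℤ := (N : ℤ) + K with hn
  have hNpos : (0 : ℤ) < (N : ℤ) := by exact_mod_cast hN
  set q : ℤ := (y' - y) / (N : ℤ) with hq
  set r : ℤ := (y' - y) % (N : ℤ) with hr
  have hr0 : 0 ≤ r := Int.emod_nonneg _ (by omega)
  have hrN : r < (N : ℤ) := Int.emod_lt_of_pos _ hNpos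
  have hsplit : y' = (y + r) + q * (N : ℤ) := by
    have h := Int.mul_ediv_add_emod (y' - y) (N : ℤ)
    rw [show (N:ℤ) * ((y' - y) / (N:ℤ)) = ((y' - y) / (N:ℤ)) * (N:ℤ) from mul_comm _ _, ← hq, ← hr] at h
    omega
  have hp' : D.p i y' = D.p i (y + r) - q * n := by
    rw [hsplit, D.p_perZ]
  rcases eq_or_lt_of_le hr0 with h0 | h0
  · refine ⟨q, ?_⟩
    rw [show (N:ℤ) * q = q * (N:ℤ) from mul_comm _ _]
    omega
  · exfalso
    have hd : n ∣ (D.p i y - D.p i (y + r)) := by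
      have : D.p i y - D.p i (y + r) = (D.p i y - D.p i y') - q * n := by omega
      rw [this]
      exact dvd_sub h (dvd_mul_left n q)
    have hlb : r ≤ D.p i y - D.p i (y + r) := by
      have := D.p_mono i y r (le_of_lt h0)
      omega
    have hub : D.p i y - D.p i (y + r) ≤ n - ((N : ℤ) - r) := by
      have h1 := D.p_mono i (y + r) ((N : ℤ) - r) (by omega)
      rw [show y + r + ((N : ℤ) - r) = y + (N : ℤ) by ring] at h1
      have h2 : D.p i (y + (N : ℤ)) = D.p i y - n := by
        have := D.p_perZ i y 1
        rw [one_mul] at this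
        rw [show y + (N : ℤ) = y + 1 * (N : ℤ) by ring]
        rw [D.p_perZ]
        omega
      omega
    have hpos : 0 < D.p i y - D.p i (y + r) := by omega
    have := Int.le_of_dvd hpos hd
    omega

/-- Row `y` is a jump row at level `i`. -/
def Jmp (i y : ℤ) : Prop := D.A (i + 1) y = D.A i y + 1

lemma jmp_or (i y : ℤ) : D.A (i + 1) y = D.A i y ∨ D.Jmp i y := by
  have h1 := D.A_succ_le i y
  have h2 := D.A_le_succ i y
  unfold Jmp
  omega

lemma val_eq_iff (i x y : ℤ) : D.f (x, y) = i ↔ (x = D.A i y ∧ D.Jmp i y) := by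
  constructor
  · intro h
    have h1 : D.A i y ≤ x := D.A_le (le_of_eq h.symm)
    have h2 : x < D.A (i + 1) y := by
      rw [← D.lt_A_iff]
      omega
    have h3 := D.A_succ_le i y
    have h4 := D.A_le_succ i y
    constructor
    · omega
    · unfold Jmp
      omega
  · rintro ⟨hx, hj⟩
    have h1 := D.A_mem i y
    have h2 : D.f (x, y) < i + 1 := by
      rw [D.lt_A_iff, hj]
      omega
    subst hx
    omega

lemma exists_jmp (i : ℤ) : ∃ y, D.Jmp i y := by
  obtain ⟨⟨x, y⟩, hxy⟩ := D.surj i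
  exact ⟨y, ((D.val_eq_iff i x y).1 hxy).2⟩

lemma cont' {i x y : ℤ} (h : D.f (x, y) = i) : ((N : ℤ) + K) ∣ (x - y - D.c i) := by
  have := D.cont x y
  rw [h] at this
  exact this

lemma jmp_dvd {i y : ℤ} (h : D.Jmp i y) : ((N : ℤ) + K) ∣ (D.p i y - D.c i) := by
  have hf : D.f (D.A i y, y) = i := (D.val_eq_iff i (D.A i y) y).2 ⟨rfl, h⟩
  exact D.cont' hf

include hK hN in
lemma jmp_iff (i y : ℤ) : D.Jmp i y ↔ ((N : ℤ) + K) ∣ (D.p i y - D.c i) := by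
  constructor
  · exact D.jmp_dvd
  · intro h
    obtain ⟨y₀, hy₀⟩ := D.exists_jmp i
    have h0 := D.jmp_dvd hy₀
    have hdvd : ((N : ℤ) + K) ∣ (D.p i y - D.p i y₀) := by
      have : D.p i y - D.p i y₀ = (D.p i y - D.c i) - (D.p i y₀ - D.c i) := by ring
      rw [this]
      exact dvd_sub h h0
    obtain ⟨q, hq⟩ := D.p_inj_mod hK hN hdvd
    have hy : y = y₀ + (-q) * (N : ℤ) := by
      rw [show (-q) * (N:ℤ) = -((N:ℤ) * q) by ring]
      omega
    have e1 : D.A (i + 1) (y₀ + (-q) * (N : ℤ)) = D.A (i + 1) y₀ - (-q) * K := D.A_perZ _ _ _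
    have e2 : D.A i (y₀ + (-q) * (N : ℤ)) = D.A i y₀ - (-q) * K := D.A_perZ _ _ _
    unfold Jmp at hy₀ ⊢
    rw [hy, e1, e2]
    omega

lemma p_succ_jmp {i y : ℤ} (h : D.Jmp i y) : D.p (i + 1) y = D.p i y + 1 := by
  unfold p
  unfold Jmp at h
  omega

lemma p_succ_eq {i y : ℤ} (h : ¬ D.Jmp i y) : D.p (i + 1) y = D.p i y := by
  rcases D.jmp_or i y with h' | h'
  · unfold p; omega
  · exact absurd h' h

include hK hN in
lemma mem_of_dvd {i r : ℤ} (h : ((N : ℤ) + K) ∣ (r - D.c i)) : ∃ y, D.p i y = r := by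
  obtain ⟨y₀, hy₀⟩ := D.exists_jmp i
  have h0 := D.jmp_dvd hy₀
  have : ((N : ℤ) + K) ∣ (r - D.p i y₀) := by
    have e : r - D.p i y₀ = (r - D.c i) - (D.p i y₀ - D.c i) := by ring
    rw [e]
    exact dvd_sub h h0
  obtain ⟨q, hq⟩ := this
  refine ⟨y₀ + (-q) * (N : ℤ), ?_⟩
  rw [D.p_perZ]
  have : (-q) * ((N : ℤ) + K) = -(((N : ℤ) + K) * q) := by ring
  rw [this]
  omega

include hK hN in
lemma not_dvd_one : ¬ ((N : ℤ) + K) ∣ (1 : ℤ) := by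
  intro h
  have := Int.le_of_dvd one_pos h
  have : (0 : ℤ) < (N : ℤ) := by exact_mod_cast hN
  omega

include hK hN in
lemma not_mem_succ_of_dvd {i r : ℤ} (h : ((N : ℤ) + K) ∣ (r - D.c i)) (y : ℤ) :
    D.p (i + 1) y ≠ r := by
  intro he
  by_cases hj : D.Jmp i y
  · have h1 := D.jmp_dvd hj
    have h2 := D.p_succ_jmp hj
    have : ((N : ℤ) + K) ∣ (1 : ℤ) := by
      have e : (1 : ℤ) = (r - D.c i) - (D.p i y - D.c i) := by omega
      rw [e]
      exact dvd_sub h h1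
    exact not_dvd_one (K := K) (N := N) hK hN this
  · have h2 := D.p_succ_eq hj
    rw [D.jmp_iff hK hN] at hj
    rw [h2] at he
    rw [he] at hj
    exact hj h

include hK hN in
lemma not_mem_of_dvd1 {i r : ℤ} (h : ((N : ℤ) + K) ∣ (r - D.c i - 1)) (y : ℤ) :
    D.p i y ≠ r := by
  intro he
  have hnj : ¬ D.Jmp i y := by
    intro hj
    have h1 := D.jmp_dvd hj
    rw [he] at h1
    have : ((N : ℤ) + K) ∣ (1 : ℤ) := by
      have e : (1 : ℤ) = (r - D.c i) - (r - D.c i - 1) := by ring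
      rw [e]
      exact dvd_sub h1 h
    exact not_dvd_one (K := K) (N := N) hK hN this
  obtain ⟨y₀, hy₀⟩ := D.exists_jmp i
  have hps : D.p (i + 1) y = r := by rw [D.p_succ_eq hnj, he]
  have hps₀ : D.p (i + 1) y₀ = D.p i y₀ + 1 := D.p_succ_jmp hy₀
  have h0 := D.jmp_dvd hy₀
  have hdvd : ((N : ℤ) + K) ∣ (D.p (i + 1) y - D.p (i + 1) y₀) := by
    have e : D.p (i + 1) y - D.p (i + 1) y₀ = (r - D.c i - 1) - (D.p i y₀ - D.c i) := by omega
    rw [e]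
    exact dvd_sub h h0
  obtain ⟨q, hq⟩ := D.p_inj_mod hK hN hdvd
  -- y₀ - y = N * q, so y = y₀ + (-q) * N, hence y is a jump row: contradiction
  have hy : y = y₀ + (-q) * (N : ℤ) := by
    rw [show (-q) * (N:ℤ) = -((N:ℤ) * q) by ring]
    omega
  apply hnj
  rw [D.jmp_iff hK hN, hy, D.p_perZ]
  have e : D.p i y₀ - (-q) * ((N : ℤ) + K) - D.c i
      = (D.p i y₀ - D.c i) + q * ((N : ℤ) + K) := by ring
  rw [e]
  exact dvd_add h0 (dvd_mul_left _ _)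

include hK hN in
lemma mem_succ_of_dvd1 {i r : ℤ} (h : ((N : ℤ) + K) ∣ (r - D.c i - 1)) :
    ∃ y, D.p (i + 1) y = r := by
  obtain ⟨y, hy⟩ := D.mem_of_dvd hK hN (i := i) (r := r - 1)
    (by rw [show r - 1 - D.c i = r - D.c i - 1 by ring]; exact h)
  have hj : D.Jmp i y := by
    rw [D.jmp_iff hK hN, hy]
    rw [show r - 1 - D.c i = r - D.c i - 1 by ring]
    exact h
  exact ⟨y, by rw [D.p_succ_jmp hj, hy]; ring⟩

include hK hN in
lemma mem_succ_iff {i r : ℤ} (h1 : ¬ ((N : ℤ) + K) ∣ (r - D.c i))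
    (h2 : ¬ ((N : ℤ) + K) ∣ (r - D.c i - 1)) :
    (∃ y, D.p (i + 1) y = r) ↔ (∃ y, D.p i y = r) := by
  constructor
  · rintro ⟨y, hy⟩
    by_cases hj : D.Jmp i y
    · exfalso
      apply h2
      have ha := D.jmp_dvd hj
      have hb := D.p_succ_jmp hj
      have e : r - D.c i - 1 = D.p i y - D.c i := by omega
      rw [e]
      exact ha
    · exact ⟨y, by rw [← D.p_succ_eq hj, hy]⟩
  · rintro ⟨y, hy⟩
    refine ⟨y, ?_⟩
    have hnj : ¬ D.Jmp i y := by
      rw [D.jmp_iff hK hN, hy]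
      exact h1
    rw [D.p_succ_eq hnj, hy]

include hK hN in
lemma p_pred_formula (i y : ℤ) :
    D.p i y = D.p (i + 1) y -
      (if ((N : ℤ) + K) ∣ (D.p (i + 1) y - D.c i - 1) then 1 else 0) := by
  by_cases hj : D.Jmp i y
  · have hb := D.p_succ_jmp hj
    have ha := D.jmp_dvd hj
    rw [if_pos]
    · omega
    · have e : D.p (i + 1) y - D.c i - 1 = D.p i y - D.c i := by omega
      rw [e]
      exact ha
  · have hb := D.p_succ_eq hj
    rw [if_neg]
    · omega
    · intro hd
      exact D.not_mem_of_dvd1 hK hN hd y (by omega)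

include hK hN in
lemma p_succ_formula (i y : ℤ) :
    D.p (i + 1) y = D.p i y +
      (if ((N : ℤ) + K) ∣ (D.p i y - D.c i) then 1 else 0) := by
  by_cases hj : ((N : ℤ) + K) ∣ (D.p i y - D.c i)
  · rw [if_pos hj]
    exact D.p_succ_jmp ((D.jmp_iff hK hN i y).2 hj)
  · rw [if_neg hj, add_zero]
    exact D.p_succ_eq (fun h => hj ((D.jmp_iff hK hN i y).1 h))

end Ctx

end DPTUnique

open DPTUnique in
/-- A standard doubly periodic tableau is determined by its degree and its content
function: if `σ, τ ∈ DPT(K,N,a,b)` have equal degrees (equivalently, equal sums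
`∑_{i<N} 𝓛(σ)(i) = ∑_{i<N} 𝓛(τ)(i)` of their associated partitions, where
`𝓛(σ)(y)` is the least `x` with `σ(x,y) ≥ 1`) and equal content functions
(`σ(x,y) = τ(x',y')` implies `x − y ≡ x' − y' (mod N+K)`), then `σ = τ`. -/
theorem dpt_determined_by_degree_and_content (K : ℤ) (N : ℕ) (hK : 0 < K)
    (hN : 0 < N) (a b : ℤ) (hm : 0 < a * (N : ℤ) - b * K)
    (σ τ : ℤ × ℤ → ℤ)
    (hσ : IsDPT K (N : ℤ) a b σ) (hτ : IsDPT K (N : ℤ) a b τ)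
    (Lσ Lτ : ℤ → ℤ)
    (hLσ : ∀ y : ℤ, IsLeast {x : ℤ | 1 ≤ σ (x, y)} (Lσ y))
    (hLτ : ∀ y : ℤ, IsLeast {x : ℤ | 1 ≤ τ (x, y)} (Lτ y))
    (hdeg : ∑ i ∈ Finset.range N, Lσ (i : ℤ) = ∑ i ∈ Finset.range N, Lτ (i : ℤ))
    (hcont : ∀ x y x' y' : ℤ, σ (x, y) = τ (x', y') →
      ((N : ℤ) + K) ∣ ((x - y) - (x' - y'))) :
    σ = τ := by
  classical
  obtain ⟨hσs, hσ2, hσ3, hσ4, hσ5⟩ := hσ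
  obtain ⟨hτs, hτ2, hτ3, hτ4, hτ5⟩ := hτ
  -- the common content function, selected from σ-cells
  set c : ℤ → ℤ := fun i => (hσs i).choose.1 - (hσs i).choose.2 with hcdef
  have hcell : ∀ i : ℤ, σ ((hσs i).choose.1, (hσs i).choose.2) = i := by
    intro i
    rw [Prod.mk.eta]
    exact (hσs i).choose_spec
  have hcontσ : ∀ x y : ℤ, ((N : ℤ) + K) ∣ (x - y - c (σ (x, y))) := by
    intro x y
    obtain ⟨⟨x'', y''⟩, hz⟩ := hτs (σ (x, y))
    have h1 := hcont x y x'' y'' (by rw [hz])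
    have h2 := hcont (hσs (σ (x, y))).choose.1 (hσs (σ (x, y))).choose.2 x'' y''
      (by rw [hcell, hz])
    have e : x - y - c (σ (x, y)) =
        ((x - y) - (x'' - y'')) -
          (((hσs (σ (x, y))).choose.1 - (hσs (σ (x, y))).choose.2) - (x'' - y'')) := by
      simp only [hcdef]
      ring
    rw [e]
    exact dvd_sub h1 h2
  have hcontτ : ∀ x y : ℤ, ((N : ℤ) + K) ∣ (x - y - c (τ (x, y))) := by
    intro x y
    have h1 := hcont (hσs (τ (x, y))).choose.1 (hσs (τ (x, y))).choose.2 x y (by rw [hcell])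
    have e : x - y - c (τ (x, y)) =
        -(((hσs (τ (x, y))).choose.1 - (hσs (τ (x, y))).choose.2) - (x - y)) := by
      simp only [hcdef]
      ring
    rw [e]
    exact dvd_neg.2 h1
  set Dσ : Ctx K N := ⟨σ, c, hσs, hσ2, hσ4, hσ5, hcontσ⟩ with hDσ
  set Dτ : Ctx K N := ⟨τ, c, hτs, hτ2, hτ4, hτ5, hcontτ⟩ with hDτ
  have hcσ : Dσ.c = c := rfl
  have hcτ : Dτ.c = c := rfl
  -- range transfer
  have step : ∀ i r : ℤ,
      ((∃ y, Dσ.p i y = r) ↔ (∃ y, Dτ.p i y = r)) ↔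
      ((∃ y, Dσ.p (i + 1) y = r) ↔ (∃ y, Dτ.p (i + 1) y = r)) := by
    intro i r
    by_cases h1 : ((N : ℤ) + K) ∣ (r - c i)
    · have sσ : ∃ y, Dσ.p i y = r := Dσ.mem_of_dvd hK hN (by rw [hcσ]; exact h1)
      have sτ : ∃ y, Dτ.p i y = r := Dτ.mem_of_dvd hK hN (by rw [hcτ]; exact h1)
      have nσ : ¬ ∃ y, Dσ.p (i + 1) y = r := by
        rintro ⟨y, hy⟩
        exact Dσ.not_mem_succ_of_dvd hK hN (by rw [hcσ]; exact h1) y hy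
      have nτ : ¬ ∃ y, Dτ.p (i + 1) y = r := by
        rintro ⟨y, hy⟩
        exact Dτ.not_mem_succ_of_dvd hK hN (by rw [hcτ]; exact h1) y hy
      constructor
      · intro _
        exact ⟨fun h => absurd h nσ, fun h => absurd h nτ⟩
      · intro _
        exact ⟨fun _ => sτ, fun _ => sσ⟩
    · by_cases h2 : ((N : ℤ) + K) ∣ (r - c i - 1)
      · have sσ : ∃ y, Dσ.p (i + 1) y = r := Dσ.mem_succ_of_dvd1 hK hN (by rw [hcσ]; exact h2)
        have sτ : ∃ y, Dτ.p (i + 1) y = r := Dτ.mem_succ_of_dvd1 hK hN (by rw [hcτ]; exact h2)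
        have nσ : ¬ ∃ y, Dσ.p i y = r := by
          rintro ⟨y, hy⟩
          exact Dσ.not_mem_of_dvd1 hK hN (by rw [hcσ]; exact h2) y hy
        have nτ : ¬ ∃ y, Dτ.p i y = r := by
          rintro ⟨y, hy⟩
          exact Dτ.not_mem_of_dvd1 hK hN (by rw [hcτ]; exact h2) y hy
        constructor
        · intro _
          exact ⟨fun _ => sτ, fun _ => sσ⟩
        · intro _
          exact ⟨fun h => absurd h nσ, fun h => absurd h nτ⟩
      · have eσ := Dσ.mem_succ_iff hK hN (r := r) (i := i)
          (by rw [hcσ]; exact h1) (by rw [hcσ]; exact h2)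
        have eτ := Dτ.mem_succ_iff hK hN (r := r) (i := i)
          (by rw [hcτ]; exact h1) (by rw [hcτ]; exact h2)
        rw [eσ, eτ]
  have allPt : ∀ i r : ℤ, ((∃ y, Dσ.p i y = r) ↔ (∃ y, Dτ.p i y = r)) := by
    have shift : ∀ (k : ℤ) (i r : ℤ),
        ((∃ y, Dσ.p i y = r) ↔ (∃ y, Dτ.p i y = r)) →
        ((∃ y, Dσ.p (i + k) y = r) ↔ (∃ y, Dτ.p (i + k) y = r)) := by
      intro k
      induction k using Int.induction_on with
      | zero => intro i r h; simpa using h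
      | succ k ih =>
          intro i r h
          have := (step (i + k) r).1 (ih i r h)
          rw [show i + ((k : ℤ) + 1) = (i + k) + 1 by ring]
          exact this
      | pred k ih =>
          intro i r h
          have h' := ih i r h
          have := (step (i + -(k : ℤ) - 1) r).2
            (by rw [show i + -(k : ℤ) - 1 + 1 = i + -(k : ℤ) by ring]; exact h')
          rw [show i + (-(k : ℤ) - 1) = i + -(k : ℤ) - 1 by ring]
          exact this
    intro i r
    have hbase : ((N : ℤ) + K) ∣ (r - c (σ (r, 0))) := by
      have := hcontσ r 0
      simpa using this
    have hPt0 : ((∃ y, Dσ.p (σ (r, 0)) y = r) ↔ (∃ y, Dτ.p (σ (r, 0)) y = r)) :=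
      ⟨fun _ => Dτ.mem_of_dvd hK hN (by rw [hcτ]; exact hbase),
       fun _ => Dσ.mem_of_dvd hK hN (by rw [hcσ]; exact hbase)⟩
    have := shift (i - σ (r, 0)) (σ (r, 0)) r hPt0
    rw [show σ (r, 0) + (i - σ (r, 0)) = i by ring] at this
    exact this
  -- the shift `t` at level 1
  obtain ⟨t, ht⟩ : ∃ t, Dσ.p 1 t = Dτ.p 1 0 := (allPt 1 (Dτ.p 1 0)).2 ⟨0, rfl⟩
  have claim1 : ∀ y : ℤ, Dτ.p 1 y = Dσ.p 1 (y + t) := by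
    intro y
    induction y using Int.induction_on with
    | zero => rw [zero_add]; exact ht.symm
    | succ y ih =>
        rw [show (y : ℤ) + 1 + t = (y : ℤ) + t + 1 by ring]
        obtain ⟨w, hw⟩ : ∃ w, Dτ.p 1 w = Dσ.p 1 ((y : ℤ) + t + 1) :=
          (allPt 1 _).1 ⟨(y : ℤ) + t + 1, rfl⟩
        obtain ⟨v, hv⟩ : ∃ v, Dσ.p 1 v = Dτ.p 1 ((y : ℤ) + 1) :=
          (allPt 1 _).2 ⟨(y : ℤ) + 1, rfl⟩
        have h1 : Dσ.p 1 ((y : ℤ) + t + 1) < Dτ.p 1 (y : ℤ) := by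
          rw [ih]
          exact Dσ.p_lt (by omega)
        have h2 : (y : ℤ) < w := Dτ.p_lt_rev (i := 1) (by rw [hw]; exact h1)
        have h4 : Dσ.p 1 ((y : ℤ) + t + 1) ≤ Dτ.p 1 ((y : ℤ) + 1) := by
          rw [← hw]
          exact Dτ.p_antitone (by omega)
        have h6 : Dσ.p 1 v < Dσ.p 1 ((y : ℤ) + t) := by
          rw [hv, ← ih]
          exact Dτ.p_lt (by omega)
        have h7 : (y : ℤ) + t < v := Dσ.p_lt_rev h6
        have h9 : Dτ.p 1 ((y : ℤ) + 1) ≤ Dσ.p 1 ((y : ℤ) + t + 1) := by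
          rw [← hv]
          exact Dσ.p_antitone (by omega)
        exact le_antisymm h9 h4
    | pred y ih =>
        rw [show -(y : ℤ) - 1 + t = -(y : ℤ) + t - 1 by ring]
        obtain ⟨w, hw⟩ : ∃ w, Dτ.p 1 w = Dσ.p 1 (-(y : ℤ) + t - 1) :=
          (allPt 1 _).1 ⟨-(y : ℤ) + t - 1, rfl⟩
        obtain ⟨v, hv⟩ : ∃ v, Dσ.p 1 v = Dτ.p 1 (-(y : ℤ) - 1) :=
          (allPt 1 _).2 ⟨-(y : ℤ) - 1, rfl⟩
        have h1 : Dτ.p 1 (-(y : ℤ)) < Dσ.p 1 (-(y : ℤ) + t - 1) := by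
          rw [ih]
          exact Dσ.p_lt (by omega)
        have h2 : w < -(y : ℤ) := Dτ.p_lt_rev (i := 1) (by rw [hw]; exact h1)
        have h4 : Dτ.p 1 (-(y : ℤ) - 1) ≤ Dσ.p 1 (-(y : ℤ) + t - 1) := by
          rw [← hw]
          exact Dτ.p_antitone (by omega)
        have h6 : Dσ.p 1 (-(y : ℤ) + t) < Dσ.p 1 v := by
          rw [hv, ← ih]
          exact Dτ.p_lt (by omega)
        have h7 : v < -(y : ℤ) + t := Dσ.p_lt_rev h6
        have h9 : Dσ.p 1 (-(y : ℤ) + t - 1) ≤ Dτ.p 1 (-(y : ℤ) - 1) := by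
          rw [← hv]
          exact Dσ.p_antitone (by omega)
        exact le_antisymm h4 h9
  -- propagate to all levels
  have claimAll : ∀ i y : ℤ, Dτ.p i y = Dσ.p i (y + t) := by
    have main : ∀ (k : ℤ) (y : ℤ), Dτ.p (1 + k) y = Dσ.p (1 + k) (y + t) := by
      intro k
      induction k using Int.induction_on with
      | zero => intro y; simpa using claim1 y
      | succ k ih =>
          intro y
          rw [show (1 : ℤ) + ((k : ℤ) + 1) = (1 + k) + 1 by ring]
          rw [Dτ.p_succ_formula hK hN (1 + k) y, Dσ.p_succ_formula hK hN (1 + k) (y + t)]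
          rw [ih y]
      | pred k ih =>
          intro y
          rw [show (1 : ℤ) + (-(k : ℤ) - 1) = (1 + -(k : ℤ)) - 1 by ring]
          have e1 := Dτ.p_pred_formula hK hN ((1 + -(k : ℤ)) - 1) y
          have e2 := Dσ.p_pred_formula hK hN ((1 + -(k : ℤ)) - 1) (y + t)
          rw [show (1 + -(k : ℤ)) - 1 + 1 = 1 + -(k : ℤ) by ring] at e1 e2
          rw [e1, e2, ih y]
    intro i y
    have := main (i - 1) y
    rw [show (1 : ℤ) + (i - 1) = i by ring] at this
    exact this
  have hA : ∀ i y : ℤ, Dτ.A i y = Dσ.A i (y + t) - t := by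
    intro i y
    have := claimAll i y
    unfold Ctx.p at this
    omega
  -- τ is the diagonal shift of σ by t
  have hft : ∀ x y : ℤ, τ (x, y) = σ (x + t, y + t) := by
    intro x y
    have hfτ : ∀ x y : ℤ, Dτ.f (x, y) = τ (x, y) := fun _ _ => rfl
    have hfσ : ∀ x y : ℤ, Dσ.f (x, y) = σ (x, y) := fun _ _ => rfl
    have h1 : τ (x, y) ≤ σ (x + t, y + t) := by
      have ha : Dτ.A (τ (x, y)) y ≤ x := Dτ.A_le (le_of_eq (hfτ x y))
      rw [hA] at ha
      have hb : Dσ.A (τ (x, y)) (y + t) ≤ x + t := by omega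
      have := Dσ.le_of_A_le hb
      rw [hfσ] at this
      exact this
    have h2 : σ (x + t, y + t) ≤ τ (x, y) := by
      have ha : Dσ.A (σ (x + t, y + t)) (y + t) ≤ x + t :=
        Dσ.A_le (le_of_eq (hfσ (x + t) (y + t)))
      have hb : Dτ.A (σ (x + t, y + t)) y ≤ x := by
        rw [hA]
        omega
      have := Dτ.le_of_A_le hb
      rw [hfτ] at this
      exact this
    omega
  -- identify the boundary functions
  have hLσA : ∀ y : ℤ, Lσ y = Dσ.A 1 y := by
    intro y
    exact (hLσ y).unique ⟨Dσ.A_mem 1 y, fun x hx => Dσ.A_le hx⟩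
  have hLτA : ∀ y : ℤ, Lτ y = Dτ.A 1 y := by
    intro y
    exact (hLτ y).unique ⟨Dτ.A_mem 1 y, fun x hx => Dτ.A_le hx⟩
  have hLshift : ∀ y : ℤ, Lτ y = Lσ (y + t) - t := by
    intro y
    rw [hLτA, hLσA, hA]
  have hLper : ∀ y : ℤ, Lσ (y + (N : ℤ)) = Lσ y - K := by
    intro y
    rw [hLσA, hLσA, Dσ.A_perN]
  -- summation argument: t = 0
  set S : ℤ → ℤ := fun r => ∑ i ∈ Finset.range N, Lσ ((i : ℤ) + r) with hS
  have Sstep : ∀ r : ℤ, S (r + 1) = S r - K := by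
    intro r
    have h1 : S (r + 1) = ∑ i ∈ Finset.range N, Lσ (((i : ℤ) + 1) + r) := by
      refine Finset.sum_congr rfl fun i _ => ?_
      rw [show (i : ℤ) + (r + 1) = ((i : ℤ) + 1) + r by ring]
    have h2 : ∑ i ∈ Finset.range (N + 1), Lσ ((i : ℤ) + r)
        = (∑ i ∈ Finset.range N, Lσ (((i : ℤ) + 1) + r)) + Lσ ((0 : ℤ) + r) := by
      have := Finset.sum_range_succ' (fun j : ℕ => Lσ ((j : ℤ) + r)) N
      simpa using this
    have h3 : ∑ i ∈ Finset.range (N + 1), Lσ ((i : ℤ) + r)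
        = (∑ i ∈ Finset.range N, Lσ ((i : ℤ) + r)) + Lσ (((N : ℕ) : ℤ) + r) :=
      Finset.sum_range_succ _ N
    have h4 : Lσ (((N : ℕ) : ℤ) + r) = Lσ r - K := by
      rw [show ((N : ℕ) : ℤ) + r = r + (N : ℤ) by ring, hLper]
    rw [h1]
    have h5 : Lσ ((0 : ℤ) + r) = Lσ r := by rw [zero_add]
    have h6 : S r = ∑ i ∈ Finset.range N, Lσ ((i : ℤ) + r) := rfl
    omega
  have Seval : ∀ u : ℤ, S u = S 0 - u * K := by
    intro u
    induction u using Int.induction_on with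
    | zero => simp
    | succ k ih =>
        have := Sstep (k : ℤ)
        rw [ih] at this
        rw [this]
        ring
    | pred k ih =>
        have := Sstep (-(k : ℤ) - 1)
        rw [show -(k : ℤ) - 1 + 1 = -(k : ℤ) by ring, ih] at this
        rw [show (-(k : ℤ) - 1) * K = -(k : ℤ) * K - K by ring]
        omega
  have hsum0 : S 0 = ∑ i ∈ Finset.range N, Lσ (i : ℤ) := by
    refine Finset.sum_congr rfl fun i _ => ?_
    rw [add_zero]
  have hsumτ : ∑ i ∈ Finset.range N, Lτ (i : ℤ) = S t - (N : ℤ) * t := by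
    have h1 : ∀ i ∈ Finset.range N, Lτ (i : ℤ) = Lσ ((i : ℤ) + t) - t :=
      fun i _ => hLshift (i : ℤ)
    rw [Finset.sum_congr rfl h1, Finset.sum_sub_distrib, Finset.sum_const,
      Finset.card_range]
    simp [hS, mul_comm]
  have ht0 : t = 0 := by
    have h1 : S 0 = S t - (N : ℤ) * t := by rw [hsum0, hdeg, hsumτ]
    have h2 := Seval t
    have h3 : t * K + (N : ℤ) * t = 0 := by omega
    have h4 : t * ((N : ℤ) + K) = 0 := by ring_nf; ring_nf at h3; omega
    have h5 : ((N : ℤ) + K) ≠ 0 := by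
      have : (0 : ℤ) < (N : ℤ) := by exact_mod_cast hN
      omega
    rcases mul_eq_zero.1 h4 with h | h
    · exact h
    · exact absurd h h5
  funext z
  obtain ⟨x, y⟩ := z
  have := hft x y
  rw [ht0, add_zero, add_zero] at this
  exact this.symm
end

section
/- Let K, N > 0 and take (a,b) = (1,0), so m = N. Let ≈ be the translation equivalence on DPT(K,N,1,0): σ ≈ τ if and only if there exist i, j ∈ ℤ with τ(x,y) = σ(x−i, y−j) for all (x,y) ∈ ℤ². Then the quotient DPT(K,N,1,0)/≈ is finite of cardinality K^(N−1). Equivalently, the set of σ ∈ DPT(K,N,1,0) with σ(0,0) = 0 has exactly K^(N−1) elements. -/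
namespace DPTaux

theorem int_affine {d : ℤ} (g : ℤ → ℤ) (h : ∀ x, g (x + 1) = g x + d) :
    ∀ x, g x = g 0 + d * x := by
  intro x
  induction x using Int.induction_on with
  | zero => simp
  | succ k ih => rw [h, ih]; push_cast; ring
  | pred k ih =>
      have := h (-(k:ℤ) - 1)
      simp only [sub_add_cancel] at this
      rw [this] at ih
      push_cast at ih ⊢
      linarith

variable (K : ℤ) (N : ℕ)

/-- The value chosen in residue class `i+1`. -/
def val (c : Fin (N - 1) → Fin K.toNat) (i : Fin (N - 1)) : ℤ :=
  ((i : ℤ) + 1) + (N : ℤ) * ((c i : ℕ) : ℤ)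

/-- The finset of values in `[0, N*K)` of a tableau built from choices `c`. -/
def V (c : Fin (N - 1) → Fin K.toNat) : Finset ℤ :=
  insert 0 (Finset.image (val K N c) Finset.univ)

theorem val_inj (c : Fin (N - 1) → Fin K.toNat) : Function.Injective (val K N c) := by
  intro i j hij
  have hi : (i : ℕ) < N - 1 := i.2
  have hj : (j : ℕ) < N - 1 := j.2
  unfold val at hij
  have hd : (N : ℤ) ∣ ((i : ℤ) - (j : ℤ)) := ⟨((c j : ℕ) : ℤ) - ((c i : ℕ) : ℤ), by linarith⟩
  have : (i : ℤ) = (j : ℤ) := by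
    rcases hd with ⟨t, ht⟩
    have h1 : (i : ℤ) < (N : ℤ) := by exact_mod_cast Nat.lt_of_lt_of_le hi (Nat.sub_le N 1)
    have h2 : (j : ℤ) < (N : ℤ) := by exact_mod_cast Nat.lt_of_lt_of_le hj (Nat.sub_le N 1)
    have h3 : (0 : ℤ) ≤ (i : ℤ) := Int.natCast_nonneg _
    have h4 : (0 : ℤ) ≤ (j : ℤ) := Int.natCast_nonneg _
    have hN2 : (2 : ℤ) ≤ (N : ℤ) := by
      have : (1 : ℕ) ≤ N - 1 := Nat.one_le_iff_ne_zero.mpr (Nat.pos_of_ne_zero (by omega)).ne'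
      exact_mod_cast (by omega : 2 ≤ N)
    have htneg : ¬ t ≥ 1 := fun h => by nlinarith
    have htpos : ¬ t ≤ -1 := fun h => by nlinarith
    have ht0 : t = 0 := by omega
    rw [ht0] at ht
    omega
  exact Fin.ext (by exact_mod_cast this)

theorem val_pos (c : Fin (N - 1) → Fin K.toNat) (i : Fin (N - 1)) : 0 < val K N c i := by
  have : (0 : ℤ) ≤ (N : ℤ) * ((c i : ℕ) : ℤ) := by positivity
  unfold val
  have : (0:ℤ) ≤ (i:ℤ) := Int.natCast_nonneg _
  omega

theorem card_V (hN : 0 < N) (c : Fin (N - 1) → Fin K.toNat) : (V K N c).card = N := by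
  unfold V
  rw [Finset.card_insert_of_notMem, Finset.card_image_of_injective _ (val_inj K N c)]
  · simp [Finset.card_univ]; omega
  · simp only [Finset.mem_image, Finset.mem_univ, true_and]
    rintro ⟨i, hi⟩
    exact absurd hi.symm (val_pos K N c i).ne

theorem V_nonneg (c : Fin (N - 1) → Fin K.toNat) : ∀ v ∈ V K N c, 0 ≤ v := by
  intro v hv
  unfold V at hv
  simp only [Finset.mem_insert, Finset.mem_image, Finset.mem_univ, true_and] at hv
  rcases hv with rfl | ⟨i, rfl⟩
  · exact le_refl 0
  · exact le_of_lt (val_pos K N c i)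

theorem V_lt (hK : 0 < K) (hN : 0 < N) (c : Fin (N - 1) → Fin K.toNat) :
    ∀ v ∈ V K N c, v < (N : ℤ) * K := by
  intro v hv
  unfold V at hv
  simp only [Finset.mem_insert, Finset.mem_image, Finset.mem_univ, true_and] at hv
  have hNK : (0:ℤ) < (N:ℤ) * K := by positivity
  rcases hv with rfl | ⟨i, rfl⟩
  · exact hNK
  · have hi : (i : ℤ) + 1 ≤ (N : ℤ) - 1 := by
      have := i.2
      have : (i : ℕ) + 1 ≤ N - 1 := this
      omega
    have hci : ((c i : ℕ) : ℤ) ≤ K - 1 := by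
      have := (c i).2
      have h2 : ((c i : ℕ) : ℤ) < (K.toNat : ℤ) := by exact_mod_cast this
      rw [Int.toNat_of_nonneg hK.le] at h2
      omega
    have : (N:ℤ) * ((c i : ℕ) : ℤ) ≤ (N:ℤ) * (K - 1) :=
      mul_le_mul_of_nonneg_left hci (Int.natCast_nonneg _)
    unfold val
    nlinarith [Int.natCast_nonneg N]

noncomputable def f0 (hN : 0 < N) (c : Fin (N - 1) → Fin K.toNat) : Fin N → ℤ :=
  (V K N c).orderEmbOfFin (card_V K N hN c)

theorem f0_mem (hN : 0 < N) (c : Fin (N - 1) → Fin K.toNat) (s : Fin N) :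
    f0 K N hN c s ∈ V K N c := Finset.orderEmbOfFin_mem _ _ _

theorem f0_mono (hN : 0 < N) (c : Fin (N - 1) → Fin K.toNat) :
    StrictMono (f0 K N hN c) := Finset.orderEmbOfFin _ _ |>.strictMono

theorem f0_range (hN : 0 < N) (c : Fin (N - 1) → Fin K.toNat) :
    ∀ v ∈ V K N c, ∃ s : Fin N, f0 K N hN c s = v := by
  intro v hv
  have := Finset.range_orderEmbOfFin (V K N c) (card_V K N hN c)
  have hv' : v ∈ Set.range ((V K N c).orderEmbOfFin (card_V K N hN c)) := by
    rw [this]; exact_mod_cast hv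
  exact hv'

theorem f0_zero (hN : 0 < N) (c : Fin (N - 1) → Fin K.toNat) :
    f0 K N hN c ⟨0, hN⟩ = 0 := by
  have h0 : (0 : ℤ) ∈ V K N c := Finset.mem_insert_self _ _
  obtain ⟨s, hs⟩ := f0_range K N hN c 0 h0
  have h1 : f0 K N hN c ⟨0, hN⟩ ≤ f0 K N hN c s :=
    (f0_mono K N hN c).monotone (Fin.mk_le_of_le_val (Nat.zero_le _))
  have h2 : 0 ≤ f0 K N hN c ⟨0, hN⟩ := V_nonneg K N c _ (f0_mem K N hN c _)
  omega

theorem emod_toNat_lt (hN : 0 < N) (y : ℤ) : (y % (N : ℤ)).toNat < N := by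
  have h1 : 0 ≤ y % (N : ℤ) := Int.emod_nonneg y (by exact_mod_cast hN.ne')
  have h2 : y % (N : ℤ) < (N : ℤ) := Int.emod_lt_of_pos y (by exact_mod_cast hN)
  omega

noncomputable def ff (hN : 0 < N) (c : Fin (N - 1) → Fin K.toNat) : ℤ → ℤ :=
  fun y => f0 K N hN c ⟨(y % (N : ℤ)).toNat, emod_toNat_lt N hN y⟩ + (N : ℤ) * K * (y / (N : ℤ))

theorem ff_spec (hN : 0 < N) (c : Fin (N - 1) → Fin K.toNat) (q : ℤ) (s : Fin N) :
    ff K N hN c ((N : ℤ) * q + (s : ℤ)) = f0 K N hN c s + (N : ℤ) * K * q := by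
  have hs0 : (0 : ℤ) ≤ (s : ℤ) := Int.natCast_nonneg _
  have hsN : ((s : ℕ) : ℤ) < (N : ℤ) := by exact_mod_cast s.2
  have hmod : ((N : ℤ) * q + (s : ℤ)) % (N : ℤ) = (s : ℤ) := by
    rw [add_comm, Int.add_mul_emod_self_left]
    exact Int.emod_eq_of_lt hs0 hsN
  have hdiv : ((N : ℤ) * q + (s : ℤ)) / (N : ℤ) = q := by
    rw [add_comm, Int.add_mul_ediv_left _ _ (by exact_mod_cast hN.ne' : (N:ℤ) ≠ 0),
      Int.ediv_eq_zero_of_lt hs0 hsN]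
    ring
  unfold ff
  rw [hdiv]
  congr 2
  exact Fin.ext (by simp [hmod])

theorem self_decomp (hN : 0 < N) (y : ℤ) :
    y = (N : ℤ) * (y / (N : ℤ)) + (((y % (N : ℤ)).toNat : ℕ) : ℤ) := by
  have h1 : 0 ≤ y % (N : ℤ) := Int.emod_nonneg y (by exact_mod_cast hN.ne')
  rw [Int.toNat_of_nonneg h1]
  exact (Int.mul_ediv_add_emod y (N : ℤ)).symm

theorem ff_apply_fin (hN : 0 < N) (c : Fin (N - 1) → Fin K.toNat) (s : Fin N) :
    ff K N hN c (s : ℤ) = f0 K N hN c s := by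
  have := ff_spec K N hN c 0 s
  simpa using this

theorem ff_bounds (hK : 0 < K) (hN : 0 < N) (c : Fin (N - 1) → Fin K.toNat) (s : Fin N) :
    0 ≤ f0 K N hN c s ∧ f0 K N hN c s < (N : ℤ) * K :=
  ⟨V_nonneg K N c _ (f0_mem K N hN c s), V_lt K N hK hN c _ (f0_mem K N hN c s)⟩

theorem ff_strictMono (hK : 0 < K) (hN : 0 < N) (c : Fin (N - 1) → Fin K.toNat) :
    StrictMono (ff K N hN c) := by
  intro y1 y2 h12
  have hNpos : (0 : ℤ) < (N : ℤ) := by exact_mod_cast hN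
  have hNK : (0:ℤ) < (N:ℤ) * K := by positivity
  have hq : y1 / (N : ℤ) ≤ y2 / (N : ℤ) := Int.ediv_le_ediv hNpos h12.le
  have hb1 := ff_bounds K N hK hN c ⟨(y1 % (N : ℤ)).toNat, emod_toNat_lt N hN y1⟩
  have hb2 := ff_bounds K N hK hN c ⟨(y2 % (N : ℤ)).toNat, emod_toNat_lt N hN y2⟩
  unfold ff
  rcases lt_or_eq_of_le hq with h | h
  · have h5 : (N:ℤ) * K * (y1 / (N:ℤ) + 1) ≤ (N:ℤ) * K * (y2 / (N:ℤ)) :=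
      mul_le_mul_of_nonneg_left (by omega) hNK.le
    nlinarith
  · have hy1 := self_decomp N hN y1
    have hy2 := self_decomp N hN y2
    rw [← h] at hy2
    have hs : ((y1 % (N : ℤ)).toNat) < ((y2 % (N : ℤ)).toNat) := by omega
    have hmono := f0_mono K N hN c
      (show (⟨(y1 % (N : ℤ)).toNat, emod_toNat_lt N hN y1⟩ : Fin N) <
        ⟨(y2 % (N : ℤ)).toNat, emod_toNat_lt N hN y2⟩ from Fin.mk_lt_mk.mpr hs)
    rw [← h]
    linarith

theorem ff_period (hN : 0 < N) (c : Fin (N - 1) → Fin K.toNat) (y : ℤ) :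
    ff K N hN c (y + (N : ℤ)) = ff K N hN c y + (N : ℤ) * K := by
  set q := y / (N : ℤ)
  set s : Fin N := ⟨(y % (N : ℤ)).toNat, emod_toNat_lt N hN y⟩ with hs
  have hy : y = (N : ℤ) * q + (s : ℤ) := by
    have := self_decomp N hN y
    simpa [hs] using this
  have h1 : ff K N hN c ((N : ℤ) * (q + 1) + (s : ℤ)) = f0 K N hN c s + (N:ℤ) * K * (q+1) :=
    ff_spec K N hN c (q+1) s
  have h2 : ff K N hN c ((N : ℤ) * q + (s : ℤ)) = f0 K N hN c s + (N:ℤ) * K * q :=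
    ff_spec K N hN c q s
  have : y + (N:ℤ) = (N : ℤ) * (q + 1) + (s : ℤ) := by rw [hy]; ring
  rw [this, h1, ← hy] at *
  rw [h2]
  ring

theorem ff_zero (hN : 0 < N) (c : Fin (N - 1) → Fin K.toNat) : ff K N hN c 0 = 0 := by
  have h : ff K N hN c ((0:ℤ)) = f0 K N hN c ⟨0, hN⟩ := by
    have := ff_apply_fin K N hN c ⟨0, hN⟩
    simpa using this
  rw [h, f0_zero]

noncomputable def Psi (hN : 0 < N) (c : Fin (N - 1) → Fin K.toNat) : ℤ × ℤ → ℤ :=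
  fun p => ff K N hN c p.2 + (N : ℤ) * p.1

theorem Psi_mem (hK : 0 < K) (hN : 0 < N) (c : Fin (N - 1) → Fin K.toNat) :
    IsDPT K (N : ℤ) 1 0 (Psi K N hN c) ∧ Psi K N hN c (0, 0) = 0 := by
  have hNpos : (0 : ℤ) < (N : ℤ) := by exact_mod_cast hN
  constructor
  · refine ⟨?_, ?_, ?_, ?_, ?_⟩
    · -- surjective
      intro v
      have hres : ∃ w ∈ V K N c, w % (N : ℤ) = v % (N : ℤ) := by
        have h1 : 0 ≤ v % (N : ℤ) := Int.emod_nonneg v hNpos.ne'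
        have h2 : v % (N : ℤ) < (N : ℤ) := Int.emod_lt_of_pos v hNpos
        by_cases h0 : v % (N : ℤ) = 0
        · exact ⟨0, Finset.mem_insert_self _ _, by simp [h0]⟩
        · have hr1 : 1 ≤ v % (N : ℤ) := by omega
          have hiN : (v % (N : ℤ) - 1).toNat < N - 1 := by omega
          refine ⟨val K N c ⟨(v % (N : ℤ) - 1).toNat, hiN⟩,
            Finset.mem_insert_of_mem (Finset.mem_image_of_mem _ (Finset.mem_univ _)), ?_⟩
          unfold val
          have : ((((v % (N : ℤ) - 1).toNat : ℕ) : ℤ)) = v % (N:ℤ) - 1 := by omega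
          rw [this, sub_add_cancel, Int.add_mul_emod_self_left,
            Int.emod_emod_of_dvd _ dvd_rfl]
      obtain ⟨w, hw, hwr⟩ := hres
      obtain ⟨s, hs⟩ := f0_range K N hN c w hw
      have hdvd : (N : ℤ) ∣ v - w := Int.ModEq.dvd hwr
      obtain ⟨x, hx⟩ := hdvd
      refine ⟨(x, (s : ℤ)), ?_⟩
      show ff K N hN c (s : ℤ) + (N : ℤ) * x = v
      rw [ff_apply_fin, hs]
      omega
    · -- K-periodicity
      intro x y
      show ff K N hN c (y - (N:ℤ)) + (N:ℤ) * (x + K) = ff K N hN c y + (N:ℤ) * x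
      have := ff_period K N hN c (y - (N:ℤ))
      simp only [sub_add_cancel] at this
      rw [this]
      ring
    · -- shift by (1,0)
      intro x y
      show ff K N hN c (y - 0) + (N:ℤ) * (x + 1) = ff K N hN c y + (N:ℤ) * x + (1 * (N:ℤ) - 0 * K)
      simp only [sub_zero]
      ring
    · -- increasing in x
      intro x y
      show ff K N hN c y + (N:ℤ) * x < ff K N hN c y + (N:ℤ) * (x + 1)
      nlinarith
    · -- increasing in y
      intro x y
      have := ff_strictMono K N hK hN c (lt_add_one y)
      show ff K N hN c y + (N:ℤ) * x < ff K N hN c (y + 1) + (N:ℤ) * x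
      omega
  · show ff K N hN c 0 + (N : ℤ) * 0 = 0
    rw [ff_zero]
    ring

theorem val_eq {c c' : Fin (N - 1) → Fin K.toNat} {i j : Fin (N - 1)}
    (h : val K N c i = val K N c' j) : (i : ℤ) = (j : ℤ) ∧ ((c i : ℕ) : ℤ) = ((c' j : ℕ) : ℤ) := by
  have hi : (i : ℕ) < N - 1 := i.2
  have hj : (j : ℕ) < N - 1 := j.2
  unfold val at h
  have hd : (N : ℤ) ∣ ((i : ℤ) - (j : ℤ)) := ⟨((c' j : ℕ) : ℤ) - ((c i : ℕ) : ℤ), by linarith⟩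
  have hij : (i : ℤ) = (j : ℤ) := by
    rcases hd with ⟨t, ht⟩
    have h1 : (i : ℤ) < (N : ℤ) := by exact_mod_cast Nat.lt_of_lt_of_le hi (Nat.sub_le N 1)
    have h2 : (j : ℤ) < (N : ℤ) := by exact_mod_cast Nat.lt_of_lt_of_le hj (Nat.sub_le N 1)
    have h3 : (0 : ℤ) ≤ (i : ℤ) := Int.natCast_nonneg _
    have h4 : (0 : ℤ) ≤ (j : ℤ) := Int.natCast_nonneg _
    have hN2 : (2 : ℤ) ≤ (N : ℤ) := by exact_mod_cast (by omega : 2 ≤ N)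
    have htneg : ¬ t ≥ 1 := fun hh => by nlinarith
    have htpos : ¬ t ≤ -1 := fun hh => by nlinarith
    have ht0 : t = 0 := by omega
    rw [ht0] at ht
    omega
  refine ⟨hij, ?_⟩
  have hNpos : (0:ℤ) < (N:ℤ) := by
    have : 0 < N := by omega
    exact_mod_cast this
  have : (N:ℤ) * ((c i : ℕ) : ℤ) = (N:ℤ) * ((c' j : ℕ) : ℤ) := by omega
  exact mul_left_cancel₀ hNpos.ne' this

theorem Psi_inj (hN : 0 < N) {c c' : Fin (N - 1) → Fin K.toNat}
    (h : Psi K N hN c = Psi K N hN c') : c = c' := by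
  have hff : ∀ y, ff K N hN c y = ff K N hN c' y := by
    intro y
    have := congrFun h (0, y)
    simpa [Psi] using this
  have hf0 : ∀ s : Fin N, f0 K N hN c s = f0 K N hN c' s := by
    intro s
    rw [← ff_apply_fin, ← ff_apply_fin, hff]
  have hV : V K N c = V K N c' := by
    apply Finset.ext
    intro v
    constructor
    · intro hv
      obtain ⟨s, hs⟩ := f0_range K N hN c v hv
      rw [← hs, hf0]
      exact f0_mem K N hN c' s
    · intro hv
      obtain ⟨s, hs⟩ := f0_range K N hN c' v hv
      rw [← hs, ← hf0]
      exact f0_mem K N hN c s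
  funext i
  have hvi : val K N c i ∈ V K N c' := by
    rw [← hV]
    exact Finset.mem_insert_of_mem (Finset.mem_image_of_mem _ (Finset.mem_univ _))
  unfold V at hvi
  simp only [Finset.mem_insert, Finset.mem_image, Finset.mem_univ, true_and] at hvi
  rcases hvi with h0 | ⟨j, hj⟩
  · exact absurd h0 (val_pos K N c i).ne'
  · obtain ⟨hij, hcij⟩ := val_eq K N hj.symm
    have : (j : ℤ) = (i : ℤ) := hij.symm
    have hj' : j = i := Fin.ext (by exact_mod_cast this)
    rw [hj'] at hcij
    exact Fin.ext (by exact_mod_cast hcij)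

theorem Psi_surj (hK : 0 < K) (hN : 0 < N) (σ : ℤ × ℤ → ℤ)
    (hσ : IsDPT K (N : ℤ) 1 0 σ ∧ σ (0, 0) = 0) :
    ∃ c : Fin (N - 1) → Fin K.toNat, Psi K N hN c = σ := by
  obtain ⟨⟨hsurj, hper, hshift, _hx, hy⟩, h00⟩ := hσ
  have hNpos : (0 : ℤ) < (N : ℤ) := by exact_mod_cast hN
  set f : ℤ → ℤ := fun y => σ (0, y) with hfdef
  have haff : ∀ x y : ℤ, σ (x, y) = f y + (N : ℤ) * x := by
    intro x y
    have h1 : ∀ x : ℤ, σ (x + 1, y) = σ (x, y) + (N : ℤ) := by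
      intro x
      have := hshift x y
      simpa using this
    exact int_affine (fun x => σ (x, y)) h1 x
  have hmono : StrictMono f := strictMono_int_of_lt_succ (fun y => hy 0 y)
  have hf0 : f 0 = 0 := h00
  have hper' : ∀ y, f (y + (N : ℤ)) = f y + (N : ℤ) * K := by
    intro y
    have h1 := hper 0 (y + (N : ℤ))
    simp only [zero_add, add_sub_cancel_right] at h1
    calc f (y + (N:ℤ)) = σ (0, y + (N:ℤ)) := rfl
      _ = σ (K, y) := h1.symm
      _ = f y + (N:ℤ) * K := by rw [haff K y]
  have hrep : ∀ q : ℤ, ∀ y, f (y + (N : ℤ) * q) = f y + (N : ℤ) * K * q := by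
    intro q
    induction q using Int.induction_on with
    | zero => simp
    | succ k ih =>
        intro y
        have h1 : y + (N:ℤ) * ((k:ℤ) + 1) = (y + (N:ℤ) * k) + (N:ℤ) := by ring
        rw [h1, hper', ih]
        ring
    | pred k ih =>
        intro y
        have h1 : y + (N:ℤ) * (-(k:ℤ) - 1) + (N:ℤ) = y + (N:ℤ) * (-(k:ℤ)) := by ring
        have h2 := hper' (y + (N:ℤ) * (-(k:ℤ) - 1))
        rw [h1, ih] at h2
        linarith [h2, (by ring : (N:ℤ) * K * (-(k:ℤ) - 1) = (N:ℤ) * K * (-(k:ℤ)) - (N:ℤ) * K)]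
  have hresid : ∀ v : ℤ, ∃ s : Fin N, f (s : ℤ) % (N : ℤ) = v % (N : ℤ) := by
    intro v
    obtain ⟨⟨x, y⟩, hxy⟩ := hsurj v
    refine ⟨⟨(y % (N : ℤ)).toNat, emod_toNat_lt N hN y⟩, ?_⟩
    have hy' : y = (((y % (N : ℤ)).toNat : ℕ) : ℤ) + (N : ℤ) * (y / (N : ℤ)) := by
      have := self_decomp N hN y
      omega
    have h1 : f y = f ((((y % (N : ℤ)).toNat : ℕ) : ℤ)) + (N:ℤ) * K * (y / (N:ℤ)) := by
      conv_lhs => rw [hy']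
      exact hrep (y / (N:ℤ)) _
    have h2 : σ (x, y) = f y + (N:ℤ) * x := haff x y
    have key : (N : ℤ) ∣ v - f ((((y % (N : ℤ)).toNat : ℕ) : ℤ)) :=
      ⟨K * (y / (N:ℤ)) + x, by rw [← hxy, h2, h1]; ring⟩
    exact (Int.modEq_iff_dvd.mpr key : Int.ModEq (N:ℤ) _ v)
  have hbound : ∀ s : Fin N, 0 ≤ f (s : ℤ) ∧ f (s : ℤ) < (N : ℤ) * K := by
    intro s
    constructor
    · rw [← hf0]
      exact hmono.monotone (Int.natCast_nonneg _)
    · have h1 : f ((N : ℕ) : ℤ) = (N : ℤ) * K := by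
        have := hrep 1 0
        simpa [hf0] using this
      rw [← h1]
      exact hmono (by exact_mod_cast s.2)
  have hinj : ∀ s t : Fin N, f (s : ℤ) % (N : ℤ) = f (t : ℤ) % (N : ℤ) → s = t := by
    have hFs : Function.Surjective
        (fun s : Fin N => (⟨(f (s:ℤ) % (N:ℤ)).toNat, emod_toNat_lt N hN _⟩ : Fin N)) := by
      intro r
      obtain ⟨s, hs⟩ := hresid (r : ℤ)
      refine ⟨s, ?_⟩
      have hr : ((r : ℕ) : ℤ) % (N : ℤ) = ((r : ℕ) : ℤ) :=
        Int.emod_eq_of_lt (Int.natCast_nonneg _) (by exact_mod_cast r.2)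
      apply Fin.ext
      simp only [Fin.val_mk]
      omega
    have hFi := Finite.injective_iff_surjective.mpr hFs
    intro s t hst
    apply hFi
    apply Fin.ext
    simp only [Fin.val_mk]
    omega
  -- define the choice function
  have hcprop : ∀ i : Fin (N - 1), ∃ s : Fin N,
      f (s : ℤ) % (N : ℤ) = ((i : ℤ) + 1) % (N : ℤ) := fun i => hresid ((i : ℤ) + 1)
  set g : Fin (N - 1) → Fin N := fun i => Classical.choose (hcprop i) with hg
  have hgspec : ∀ i : Fin (N - 1), f ((g i : ℕ) : ℤ) % (N : ℤ) = (i : ℤ) + 1 := by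
    intro i
    have h1 := Classical.choose_spec (hcprop i)
    have hi : ((i : ℕ) : ℤ) + 1 < (N : ℤ) := by
      have := i.2
      have : (i : ℕ) + 1 < N := by omega
      exact_mod_cast this
    have h2 : ((i : ℤ) + 1) % (N : ℤ) = (i : ℤ) + 1 :=
      Int.emod_eq_of_lt (by positivity) hi
    have h0 : g i = Classical.choose (hcprop i) := rfl
    rw [h0]
    omega
  have hct : ∀ i : Fin (N - 1), (f ((g i : ℕ) : ℤ) / (N : ℤ)).toNat < K.toNat := by
    intro i
    have hb := hbound (g i)
    have h1 : f ((g i : ℕ) : ℤ) / (N : ℤ) < K := by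
      rw [Int.ediv_lt_iff_lt_mul hNpos]
      linarith [hb.2]
    have h2 : 0 ≤ f ((g i : ℕ) : ℤ) / (N : ℤ) := Int.ediv_nonneg hb.1 hNpos.le
    omega
  set c : Fin (N - 1) → Fin K.toNat := fun i => ⟨(f ((g i : ℕ) : ℤ) / (N : ℤ)).toNat, hct i⟩
    with hc
  have hcval : ∀ i : Fin (N - 1), val K N c i = f ((g i : ℕ) : ℤ) := by
    intro i
    have hb := hbound (g i)
    have h1 := Int.mul_ediv_add_emod (f ((g i : ℕ) : ℤ)) (N : ℤ)
    have h2 := hgspec i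
    unfold val
    simp only [hc]
    have h3 : (((f ((g i : ℕ) : ℤ) / (N : ℤ)).toNat : ℕ) : ℤ) = f ((g i : ℕ) : ℤ) / (N : ℤ) := by
      have : 0 ≤ f ((g i : ℕ) : ℤ) / (N : ℤ) := Int.ediv_nonneg hb.1 hNpos.le
      omega
    rw [h3]
    omega
  -- every value f s (s in [0,N)) lies in V c
  have hmemV : ∀ s : Fin N, f (s : ℤ) ∈ V K N c := by
    intro s
    have h1 : 0 ≤ f (s:ℤ) % (N:ℤ) := Int.emod_nonneg _ hNpos.ne'
    have h2 : f (s:ℤ) % (N:ℤ) < (N:ℤ) := Int.emod_lt_of_pos _ hNpos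
    by_cases h0 : f (s:ℤ) % (N:ℤ) = 0
    · have hz : f ((( (⟨0, hN⟩ : Fin N) : ℕ)) : ℤ) % (N:ℤ) = 0 := by
        simp [hf0]
      have : s = ⟨0, hN⟩ := hinj s ⟨0, hN⟩ (by rw [h0, hz])
      rw [this]
      have : f (((⟨0, hN⟩ : Fin N) : ℕ) : ℤ) = 0 := by simp [hf0]
      rw [this]
      exact Finset.mem_insert_self _ _
    · have hiN : (f (s:ℤ) % (N:ℤ) - 1).toNat < N - 1 := by omega
      set i : Fin (N - 1) := ⟨(f (s:ℤ) % (N:ℤ) - 1).toNat, hiN⟩ with hi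
      have hieq : (i : ℤ) + 1 = f (s:ℤ) % (N:ℤ) := by
        simp only [hi, Fin.val_mk]
        omega
      have h3 : f ((g i : ℕ) : ℤ) % (N:ℤ) = f (s:ℤ) % (N:ℤ) := by rw [hgspec i, hieq]
      have h4 : g i = s := hinj (g i) s h3
      have h5 : val K N c i = f (s : ℤ) := by rw [hcval i, h4]
      rw [← h5]
      exact Finset.mem_insert_of_mem (Finset.mem_image_of_mem _ (Finset.mem_univ _))
  have hf0eq : ∀ s : Fin N, f (s : ℤ) = f0 K N hN c s := by
    have hsm : StrictMono (fun s : Fin N => f (s : ℤ)) := by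
      intro s t hst
      exact hmono (by exact_mod_cast hst)
    intro s
    exact congrFun (Finset.orderEmbOfFin_unique (card_V K N hN c) hmemV hsm) s
  refine ⟨c, ?_⟩
  funext p
  obtain ⟨x, y⟩ := p
  show ff K N hN c y + (N : ℤ) * x = σ (x, y)
  rw [haff x y]
  congr 1
  -- ff c y = f y
  set s : Fin N := ⟨(y % (N : ℤ)).toNat, emod_toNat_lt N hN y⟩ with hs
  have hy' : y = (N : ℤ) * (y / (N : ℤ)) + ((s : ℕ) : ℤ) := self_decomp N hN y
  calc ff K N hN c y = ff K N hN c ((N : ℤ) * (y / (N : ℤ)) + ((s : ℕ) : ℤ)) := by rw [← hy']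
    _ = f0 K N hN c s + (N:ℤ) * K * (y / (N:ℤ)) := ff_spec K N hN c _ s
    _ = f ((s : ℕ) : ℤ) + (N:ℤ) * K * (y / (N:ℤ)) := by rw [hf0eq s]
    _ = f (((s : ℕ) : ℤ) + (N:ℤ) * (y / (N:ℤ))) := (hrep _ _).symm
    _ = f y := by rw [add_comm, ← hy']

end DPTaux

/-- For `(a,b) = (1,0)` (so `m = N`), the set of `σ ∈ DPT(K,N,1,0)` with
`σ(0,0) = 0` — i.e. `DPT(K,N,1,0)` up to translations — has exactly `K^(N−1)`
elements. -/
theorem dpt_count_a1_b0 (K : ℤ) (N : ℕ) (hK : 0 < K) (hN : 0 < N) :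
    {σ : ℤ × ℤ → ℤ | IsDPT K (N : ℤ) 1 0 σ ∧ σ (0, 0) = 0}.Finite ∧
    (({σ : ℤ × ℤ → ℤ | IsDPT K (N : ℤ) 1 0 σ ∧ σ (0, 0) = 0}.ncard : ℤ)
      = K ^ (N - 1)) := by
  have hSeq : {σ : ℤ × ℤ → ℤ | IsDPT K (N : ℤ) 1 0 σ ∧ σ (0, 0) = 0}
      = Set.range (DPTaux.Psi K N hN) := by
    ext σ
    constructor
    · intro h
      obtain ⟨c, hc⟩ := DPTaux.Psi_surj K N hK hN σ h
      exact ⟨c, hc⟩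
    · rintro ⟨c, rfl⟩
      exact DPTaux.Psi_mem K N hK hN c
  rw [hSeq]
  refine ⟨Set.finite_range _, ?_⟩
  have hinj : Function.Injective (DPTaux.Psi K N hN) := fun c c' h => DPTaux.Psi_inj K N hN h
  have hcard : (Set.range (DPTaux.Psi K N hN)).ncard
      = Nat.card (Fin (N - 1) → Fin K.toNat) := by
    rw [← Nat.card_coe_set_eq]
    exact Nat.card_range_of_injective hinj
  rw [hcard]
  have h2 : Nat.card (Fin (N - 1) → Fin K.toNat) = K.toNat ^ (N - 1) := by
    simp [Nat.card_eq_fintype_card]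
  rw [h2]
  push_cast
  rw [Int.toNat_of_nonneg hK.le]
end

section
/- Fix integers K, N > 0 and a, b with m = a*N − b*K > 0, and suppose gcd(K, a) = 1. Let ≈ be the translation equivalence on DPT(K,N,a,b): σ ≈ τ if and only if there exist i, j ∈ ℤ with τ(x,y) = σ(x−i, y−j) for all (x,y). Then the quotient DPT(K,N,a,b)/≈ is finite of cardinality at most K^(m−1). Equivalently, the set of σ ∈ DPT(K,N,a,b) with σ(0,0) = 0 has at most K^(m−1) elements. -/
lemma dpt_shift {K N a b : ℤ} {σ : ℤ × ℤ → ℤ} (h : IsDPT K N a b σ) (i j x y : ℤ) :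
    σ (x + (i * K + j * a), y + (-(i * N) - j * b)) = σ (x, y) + j * (a * N - b * K) := by
  obtain ⟨-, h1, h2, -, -⟩ := h
  have H1 : ∀ (i x y : ℤ), σ (x + i * K, y - i * N) = σ (x, y) := by
    intro i
    induction i using Int.induction_on with
    | zero => intro x y; norm_num
    | succ k ih =>
      intro x y
      have hx : x + ((k : ℤ) + 1) * K = (x + (k : ℤ) * K) + K := by ring
      have hy : y - ((k : ℤ) + 1) * N = (y - (k : ℤ) * N) - N := by ring
      rw [hx, hy, h1, ih]
    | pred k ih =>
      intro x y
      have e := h1 (x + (-(k : ℤ) - 1) * K) (y - (-(k : ℤ) - 1) * N)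
      have hx : x + (-(k : ℤ) - 1) * K + K = x + (-(k : ℤ)) * K := by ring
      have hy : y - (-(k : ℤ) - 1) * N - N = y - (-(k : ℤ)) * N := by ring
      rw [hx, hy, ih] at e
      exact e.symm
  have H2 : ∀ (j x y : ℤ), σ (x + j * a, y - j * b) = σ (x, y) + j * (a * N - b * K) := by
    intro j
    induction j using Int.induction_on with
    | zero => intro x y; norm_num
    | succ k ih =>
      intro x y
      have hx : x + ((k : ℤ) + 1) * a = (x + (k : ℤ) * a) + a := by ring
      have hy : y - ((k : ℤ) + 1) * b = (y - (k : ℤ) * b) - b := by ring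
      rw [hx, hy, h2, ih]; ring
    | pred k ih =>
      intro x y
      have e := h2 (x + (-(k : ℤ) - 1) * a) (y - (-(k : ℤ) - 1) * b)
      have hx : x + (-(k : ℤ) - 1) * a + a = x + (-(k : ℤ)) * a := by ring
      have hy : y - (-(k : ℤ) - 1) * b - b = y - (-(k : ℤ)) * b := by ring
      rw [hx, hy, ih] at e
      linarith
  have hx : x + (i * K + j * a) = (x + i * K) + j * a := by ring
  have hy : y + (-(i * N) - j * b) = (y - i * N) - j * b := by ring
  rw [hx, hy, H2, H1]

lemma dpt_move {K N a b : ℤ} {σ : ℤ × ℤ → ℤ} (h : IsDPT K N a b σ) {u w : ℤ}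
    (huw : u * K + w * a = 1) (x y s t : ℤ) :
    σ (x + s, y + (-(s * (u * N + w * b)) + t * (a * N - b * K)))
      = σ (x, y) + (s * w + t * K) * (a * N - b * K) := by
  have hh := dpt_shift h (s * u - t * a) (s * w + t * K) x y
  have e1 : (s * u - t * a) * K + (s * w + t * K) * a = s := by linear_combination s * huw
  have e2 : -((s * u - t * a) * N) - (s * w + t * K) * b
      = -(s * (u * N + w * b)) + t * (a * N - b * K) := by ring
  rw [e1, e2] at hh
  exact hh

lemma dpt_structure {K N a b : ℤ} {σ : ℤ × ℤ → ℤ} (hK : 0 < K) (hm : 0 < a * N - b * K)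
    (hσ : IsDPT K N a b σ) {u w : ℤ} (huw : u * K + w * a = 1) :
    ∀ p q : ℤ × ℤ, σ p = σ q → ∃ i : ℤ, q.1 = p.1 + i * K ∧ q.2 = p.2 - i * N := by
  have hsurj := hσ.1
  have hmc : (((a * N - b * K).toNat : ℕ) : ℤ) = a * N - b * K := Int.toNat_of_nonneg hm.le
  have hm0 : (a * N - b * K).toNat ≠ 0 := by
    have h1 : (0 : ℤ) < (((a * N - b * K).toNat : ℕ) : ℤ) := by rw [hmc]; exact hm
    exact_mod_cast h1.ne'
  haveI : NeZero (a * N - b * K).toNat := ⟨hm0⟩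
  have hmz : ((a * N - b * K : ℤ) : ZMod (a * N - b * K).toNat) = 0 := by
    rw [← hmc]; exact_mod_cast ZMod.natCast_self (a * N - b * K).toNat
  have cong : ∀ p q : ℤ × ℤ,
      (((u * N + w * b) * p.1 + p.2 : ℤ) : ZMod (a * N - b * K).toNat)
        = (((u * N + w * b) * q.1 + q.2 : ℤ) : ZMod (a * N - b * K).toNat) →
      ((σ p : ℤ) : ZMod (a * N - b * K).toNat) = ((σ q : ℤ) : ZMod (a * N - b * K).toNat) := by
    intro p q hpq
    have hdvd : (((a * N - b * K).toNat : ℕ) : ℤ) ∣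
        ((u * N + w * b) * q.1 + q.2) - ((u * N + w * b) * p.1 + p.2) :=
      ((ZMod.intCast_eq_intCast_iff _ _ _).mp hpq).dvd
    rw [hmc] at hdvd
    obtain ⟨t, ht⟩ := hdvd
    have hmv := dpt_move hσ huw p.1 p.2 (q.1 - p.1) t
    have harg : (p.1 + (q.1 - p.1),
        p.2 + (-((q.1 - p.1) * (u * N + w * b)) + t * (a * N - b * K))) = q := by
      have e1 : p.1 + (q.1 - p.1) = q.1 := by ring
      have e2 : p.2 + (-((q.1 - p.1) * (u * N + w * b)) + t * (a * N - b * K)) = q.2 := by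
        linear_combination -ht
      rw [e1, e2]
    rw [harg] at hmv
    rw [hmv, Int.cast_add, Int.cast_mul, hmz, mul_zero, add_zero]
  have hψp : ∀ p : ℤ × ℤ,
      ((σ (0, (((((u * N + w * b) * p.1 + p.2 : ℤ) : ZMod (a * N - b * K).toNat)).val : ℤ)) : ℤ)
          : ZMod (a * N - b * K).toNat)
        = ((σ p : ℤ) : ZMod (a * N - b * K).toNat) := by
    intro p
    apply cong
    push_cast
    simp [ZMod.natCast_val, ZMod.cast_id]
  have hψinj : ∀ p q : ℤ × ℤ, σ p = σ q →
      (((u * N + w * b) * p.1 + p.2 : ℤ) : ZMod (a * N - b * K).toNat)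
        = (((u * N + w * b) * q.1 + q.2 : ℤ) : ZMod (a * N - b * K).toNat) := by
    have hψsurj : Function.Surjective
        (fun r : ZMod (a * N - b * K).toNat =>
          ((σ (0, (r.val : ℤ)) : ℤ) : ZMod (a * N - b * K).toNat)) := by
      intro t
      obtain ⟨p, hp⟩ := hsurj ((t.val : ℤ))
      refine ⟨(((u * N + w * b) * p.1 + p.2 : ℤ) : ZMod (a * N - b * K).toNat), ?_⟩
      show ((σ (0, _) : ℤ) : ZMod (a * N - b * K).toNat) = t
      rw [hψp p, hp]
      push_cast
      simp [ZMod.natCast_val, ZMod.cast_id]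
    have hinj := Finite.injective_iff_surjective.mpr hψsurj
    intro p q hpq
    apply hinj
    show ((σ (0, _) : ℤ) : ZMod (a * N - b * K).toNat)
        = ((σ (0, _) : ℤ) : ZMod (a * N - b * K).toNat)
    rw [hψp p, hψp q, hpq]
  intro p q hpq
  have hρ := hψinj p q hpq
  have hdvd : (((a * N - b * K).toNat : ℕ) : ℤ) ∣
      ((u * N + w * b) * q.1 + q.2) - ((u * N + w * b) * p.1 + p.2) :=
    ((ZMod.intCast_eq_intCast_iff _ _ _).mp hρ).dvd
  rw [hmc] at hdvd
  obtain ⟨t, ht⟩ := hdvd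
  have hmv := dpt_move hσ huw p.1 p.2 (q.1 - p.1) t
  have harg : (p.1 + (q.1 - p.1),
      p.2 + (-((q.1 - p.1) * (u * N + w * b)) + t * (a * N - b * K))) = q := by
    have e1 : p.1 + (q.1 - p.1) = q.1 := by ring
    have e2 : p.2 + (-((q.1 - p.1) * (u * N + w * b)) + t * (a * N - b * K)) = q.2 := by
      linear_combination -ht
    rw [e1, e2]
  rw [harg] at hmv
  have hmv' : σ q = σ p + ((q.1 - p.1) * w + t * K) * (a * N - b * K) := hmv
  have hz : ((q.1 - p.1) * w + t * K) * (a * N - b * K) = 0 := by linarith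
  have hj : (q.1 - p.1) * w + t * K = 0 := by
    rcases mul_eq_zero.mp hz with h | h
    · exact h
    · exact absurd h (ne_of_gt hm)
  have hco : IsCoprime K w := ⟨u, a, by linear_combination huw⟩
  have hdvds : K ∣ (q.1 - p.1) := hco.dvd_of_dvd_mul_right ⟨-t, by linear_combination hj⟩
  obtain ⟨i, hi⟩ := hdvds
  refine ⟨i, by linear_combination hi, ?_⟩
  have hKt : K * (i * w + t) = 0 := by linear_combination hj - w * hi
  have ht2 : i * w + t = 0 := by
    rcases mul_eq_zero.mp hKt with h | h
    · exact absurd h (ne_of_gt hK)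
    · exact h
  have e2 : q.2 = p.2 + (-((q.1 - p.1) * (u * N + w * b)) + t * (a * N - b * K)) := by
    linear_combination ht
  have hc1 : K * (u * N + w * b) + w * (a * N - b * K) = N := by linear_combination N * huw
  linear_combination e2 - (u * N + w * b) * hi + (a * N - b * K) * ht2 - i * hc1

lemma strictMono_shift {f g : ℤ → ℤ} (hf : StrictMono f) (hg : StrictMono g)
    (hr : Set.range f = Set.range g) : ∃ s : ℤ, ∀ y, g y = f (y + s) := by
  obtain ⟨z, hz⟩ : f 0 ∈ Set.range g := by rw [← hr]; exact Set.mem_range_self _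
  have key : ∀ y : ℤ, g (z + y) = f y := by
    intro y
    induction y using Int.induction_on with
    | zero => simpa using hz
    | succ k ih =>
      obtain ⟨ζ, hζ⟩ : f ((k : ℤ) + 1) ∈ Set.range g := by
        rw [← hr]; exact Set.mem_range_self _
      obtain ⟨η, hη⟩ : g (z + (k : ℤ) + 1) ∈ Set.range f := by
        rw [hr]; exact Set.mem_range_self _
      have e1 : f ((k : ℤ) + 1) ≤ g (z + (k : ℤ) + 1) := by
        have t1 : f (k : ℤ) < f η := by
          rw [hη]
          calc f (k : ℤ) = g (z + (k : ℤ)) := ih.symm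
            _ < g (z + (k : ℤ) + 1) := hg (by omega)
        have t2 : (k : ℤ) < η := hf.lt_iff_lt.mp t1
        calc f ((k : ℤ) + 1) ≤ f η := hf.monotone (by omega)
          _ = g (z + (k : ℤ) + 1) := hη
      have e2 : g (z + (k : ℤ) + 1) ≤ f ((k : ℤ) + 1) := by
        have t1 : g (z + (k : ℤ)) < g ζ := by
          calc g (z + (k : ℤ)) = f (k : ℤ) := ih
            _ < f ((k : ℤ) + 1) := hf (by omega)
            _ = g ζ := hζ.symm
        have t2 : z + (k : ℤ) < ζ := hg.lt_iff_lt.mp t1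
        calc g (z + (k : ℤ) + 1) ≤ g ζ := hg.monotone (by omega)
          _ = f ((k : ℤ) + 1) := hζ
      have e3 : z + ((k : ℤ) + 1) = z + (k : ℤ) + 1 := by ring
      rw [e3]
      exact le_antisymm e2 e1
    | pred k ih =>
      obtain ⟨ζ, hζ⟩ : f (-(k : ℤ) - 1) ∈ Set.range g := by
        rw [← hr]; exact Set.mem_range_self _
      obtain ⟨η, hη⟩ : g (z + -(k : ℤ) - 1) ∈ Set.range f := by
        rw [hr]; exact Set.mem_range_self _
      have e1 : g (z + -(k : ℤ) - 1) ≤ f (-(k : ℤ) - 1) := by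
        have t1 : f η < f (-(k : ℤ)) := by
          calc f η = g (z + -(k : ℤ) - 1) := hη
            _ < g (z + -(k : ℤ)) := hg (by omega)
            _ = f (-(k : ℤ)) := ih
        have t2 : η < -(k : ℤ) := hf.lt_iff_lt.mp t1
        calc g (z + -(k : ℤ) - 1) = f η := hη.symm
          _ ≤ f (-(k : ℤ) - 1) := hf.monotone (by omega)
      have e2 : f (-(k : ℤ) - 1) ≤ g (z + -(k : ℤ) - 1) := by
        have t1 : g ζ < g (z + -(k : ℤ)) := by
          calc g ζ = f (-(k : ℤ) - 1) := hζ
            _ < f (-(k : ℤ)) := hf (by omega)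
            _ = g (z + -(k : ℤ)) := ih.symm
        have t2 : ζ < z + -(k : ℤ) := hg.lt_iff_lt.mp t1
        calc f (-(k : ℤ) - 1) = g ζ := hζ.symm
          _ ≤ g (z + -(k : ℤ) - 1) := hg.monotone (by omega)
      have e3 : z + (-(k : ℤ) - 1) = z + -(k : ℤ) - 1 := by ring
      rw [e3]
      exact le_antisymm e1 e2
  refine ⟨-z, fun y => ?_⟩
  have h1 := key (y + -z)
  have h2 : z + (y + -z) = y := by ring
  rw [h2] at h1
  exact h1

lemma dpt_unique {K N a b : ℤ} {σ τ : ℤ × ℤ → ℤ}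
    (hσ : IsDPT K N a b σ) (hτ : IsDPT K N a b τ)
    {u w : ℤ} (huw : u * K + w * a = 1)
    (hcol : ∀ x v : ℤ, (∃ y, σ (x, y) = v) ↔ (∃ y, τ (x, y) = v))
    (h0 : σ (0, 0) = 0) (h0' : τ (0, 0) = 0) : σ = τ := by
  have hfs : StrictMono fun y => σ (0, y) := strictMono_int_of_lt_succ fun y => hσ.2.2.2.2 0 y
  have hgs : StrictMono fun y => τ (0, y) := strictMono_int_of_lt_succ fun y => hτ.2.2.2.2 0 y
  have hrange : Set.range (fun y => σ (0, y)) = Set.range (fun y => τ (0, y)) := by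
    ext v
    simp only [Set.mem_range]
    exact hcol 0 v
  obtain ⟨s, hs0⟩ := strictMono_shift hfs hgs hrange
  have hs : ∀ y : ℤ, τ (0, y) = σ (0, y + s) := hs0
  have hszero : s = 0 := by
    have h1 : σ (0, 0 + s) = σ (0, 0) := by rw [← hs 0, h0', h0]
    have h2 := hfs.injective h1
    omega
  have P0 : ∀ y : ℤ, τ (0, y) = σ (0, y) := by
    intro y; rw [hs y, hszero, add_zero]
  have stepK : ∀ x : ℤ, (∀ y, τ (x, y) = σ (x, y)) → ∀ y, τ (x + K, y) = σ (x + K, y) := by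
    intro x hx y
    have e1 := hτ.2.1 x (y + N)
    have e2 := hσ.2.1 x (y + N)
    have e3 := hx (y + N)
    simp only [add_sub_cancel_right] at e1 e2
    rw [e1, e2, e3]
  have stepK' : ∀ x : ℤ, (∀ y, τ (x + K, y) = σ (x + K, y)) → ∀ y, τ (x, y) = σ (x, y) := by
    intro x hx y
    have e1 := hτ.2.1 x y
    have e2 := hσ.2.1 x y
    have e3 := hx (y - N)
    linarith
  have stepa : ∀ x : ℤ, (∀ y, τ (x, y) = σ (x, y)) → ∀ y, τ (x + a, y) = σ (x + a, y) := by
    intro x hx y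
    have e1 := hτ.2.2.1 x (y + b)
    have e2 := hσ.2.2.1 x (y + b)
    have e3 := hx (y + b)
    simp only [add_sub_cancel_right] at e1 e2
    rw [e1, e2, e3]
  have stepa' : ∀ x : ℤ, (∀ y, τ (x + a, y) = σ (x + a, y)) → ∀ y, τ (x, y) = σ (x, y) := by
    intro x hx y
    have e1 := hτ.2.2.1 x y
    have e2 := hσ.2.2.1 x y
    have e3 := hx (y - b)
    linarith
  have iterK : ∀ i : ℤ, ∀ x : ℤ, (∀ y, τ (x, y) = σ (x, y)) →
      ∀ y, τ (x + i * K, y) = σ (x + i * K, y) := by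
    intro i
    induction i using Int.induction_on with
    | zero => intro x hx y; simpa using hx y
    | succ k ih =>
      intro x hx y
      have hxx : x + ((k : ℤ) + 1) * K = (x + (k : ℤ) * K) + K := by ring
      rw [hxx]
      exact stepK _ (ih x hx) y
    | pred k ih =>
      intro x hx y
      have hxx : x + (-(k : ℤ) - 1) * K = (x + (-(k : ℤ)) * K - K) := by ring
      rw [hxx]
      refine stepK' (x + (-(k : ℤ)) * K - K) ?_ y
      intro y'
      have hxy : x + (-(k : ℤ)) * K - K + K = x + (-(k : ℤ)) * K := by ring
      rw [hxy]
      exact ih x hx y'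
  have itera : ∀ j : ℤ, ∀ x : ℤ, (∀ y, τ (x, y) = σ (x, y)) →
      ∀ y, τ (x + j * a, y) = σ (x + j * a, y) := by
    intro j
    induction j using Int.induction_on with
    | zero => intro x hx y; simpa using hx y
    | succ k ih =>
      intro x hx y
      have hxx : x + ((k : ℤ) + 1) * a = (x + (k : ℤ) * a) + a := by ring
      rw [hxx]
      exact stepa _ (ih x hx) y
    | pred k ih =>
      intro x hx y
      have hxx : x + (-(k : ℤ) - 1) * a = (x + (-(k : ℤ)) * a - a) := by ring
      rw [hxx]
      refine stepa' (x + (-(k : ℤ)) * a - a) ?_ y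
      intro y'
      have hxy : x + (-(k : ℤ)) * a - a + a = x + (-(k : ℤ)) * a := by ring
      rw [hxy]
      exact ih x hx y'
  funext p
  obtain ⟨x, y⟩ := p
  have h1 := iterK (x * u) 0 P0
  have h2 := itera (x * w) (0 + (x * u) * K) h1
  have hxx : 0 + (x * u) * K + (x * w) * a = x := by linear_combination x * huw
  rw [hxx] at h2
  exact (h2 y).symm

noncomputable def Rfun (K N a b : ℤ) (K' : ℕ) (σ : ℤ × ℤ → ℤ) (h : IsDPT K N a b σ)
    (v : ℤ) : ZMod K' :=
  (((h.1 v).choose.1 : ℤ) : ZMod K')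

/-- If `gcd(K, a) = 1`, the set of `σ ∈ DPT(K,N,a,b)` with `σ(0,0) = 0` — i.e.
`DPT(K,N,a,b)` up to translations — is finite with at most `K^(m−1)` elements,
where `m = a*N − b*K`. -/
theorem dpt_count_upper_bound (K N a b : ℤ) (hK : 0 < K) (hN : 0 < N)
    (hm : 0 < a * N - b * K) (hgcd : Int.gcd K a = 1) :
    {σ : ℤ × ℤ → ℤ | IsDPT K N a b σ ∧ σ (0, 0) = 0}.Finite ∧
    (({σ : ℤ × ℤ → ℤ | IsDPT K N a b σ ∧ σ (0, 0) = 0}.ncard : ℤ)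
      ≤ K ^ (a * N - b * K - 1).toNat) := by
  obtain ⟨u, w, huw⟩ : ∃ u w : ℤ, u * K + w * a = 1 := by
    obtain ⟨x, y, h⟩ := Int.isCoprime_iff_gcd_eq_one.mpr hgcd
    exact ⟨x, y, h⟩
  haveI : NeZero K.toNat := ⟨by omega⟩
  have hKc : ((K.toNat : ℕ) : ℤ) = K := Int.toNat_of_nonneg hK.le
  have hKz : ((K : ℤ) : ZMod K.toNat) = 0 := by
    rw [← hKc]; exact_mod_cast ZMod.natCast_self K.toNat
  have props : ∀ (σ : ℤ × ℤ → ℤ) (hσd : IsDPT K N a b σ), σ (0, 0) = 0 →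
      (∀ x v : ℤ, (∃ y, σ (x, y) = v) ↔ ((x : ZMod K.toNat) = Rfun K N a b K.toNat σ hσd v)) ∧
      Rfun K N a b K.toNat σ hσd 0 = 0 ∧
      (∀ t v : ℤ, Rfun K N a b K.toNat σ hσd (v + t * (a * N - b * K))
        = Rfun K N a b K.toNat σ hσd v + ((t * a : ℤ) : ZMod K.toNat)) := by
    intro σ hσd hσ0
    have hps : ∀ v : ℤ, σ ((hσd.1 v).choose) = v := fun v => (hσd.1 v).choose_spec
    have key : ∀ (v : ℤ) (p : ℤ × ℤ), σ p = v →
        ((p.1 : ℤ) : ZMod K.toNat) = Rfun K N a b K.toNat σ hσd v := by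
      intro v p hp
      obtain ⟨i, hi1, hi2⟩ := dpt_structure hK hm hσd huw p ((hσd.1 v).choose)
        (by rw [hp, hps v])
      show ((p.1 : ℤ) : ZMod K.toNat) = (((hσd.1 v).choose.1 : ℤ) : ZMod K.toNat)
      rw [hi1, Int.cast_add, Int.cast_mul, hKz, mul_zero, add_zero]
    have colchar : ∀ x v : ℤ,
        (∃ y, σ (x, y) = v) ↔ ((x : ZMod K.toNat) = Rfun K N a b K.toNat σ hσd v) := by
      intro x v
      constructor
      · rintro ⟨y, hy⟩
        exact key v (x, y) hy
      · intro hx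
        have hx' : ((x : ℤ) : ZMod K.toNat) = (((hσd.1 v).choose.1 : ℤ) : ZMod K.toNat) := hx
        have hdvd : ((K.toNat : ℕ) : ℤ) ∣ ((hσd.1 v).choose.1 - x) :=
          ((ZMod.intCast_eq_intCast_iff _ _ _).mp hx').dvd
        rw [hKc] at hdvd
        obtain ⟨i, hi⟩ := hdvd
        have e := dpt_shift hσd (-i) 0 ((hσd.1 v).choose.1) ((hσd.1 v).choose.2)
        have e1 : (hσd.1 v).choose.1 + (-i * K + 0 * a) = x := by linear_combination hi
        have e2 : (hσd.1 v).choose.2 + (-(-i * N) - 0 * b) = (hσd.1 v).choose.2 + i * N := by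
          ring
        rw [e1, e2] at e
        refine ⟨(hσd.1 v).choose.2 + i * N, ?_⟩
        rw [e]
        have h3 : σ ((hσd.1 v).choose.1, (hσd.1 v).choose.2) = v := hps v
        rw [h3]
        ring
    refine ⟨colchar, ?_, ?_⟩
    · have h4 := key 0 (0, 0) hσ0
      rw [← h4]
      norm_num
    · have Rshift : ∀ v : ℤ, Rfun K N a b K.toNat σ hσd (v + (a * N - b * K))
          = Rfun K N a b K.toNat σ hσd v + ((a : ℤ) : ZMod K.toNat) := by
        intro v
        have e := hσd.2.2.1 ((hσd.1 v).choose.1) ((hσd.1 v).choose.2)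
        have h3 : σ ((hσd.1 v).choose.1, (hσd.1 v).choose.2) = v := hps v
        rw [h3] at e
        have h5 := key (v + (a * N - b * K))
          ((hσd.1 v).choose.1 + a, (hσd.1 v).choose.2 - b) e
        rw [← h5]
        show (((hσd.1 v).choose.1 + a : ℤ) : ZMod K.toNat)
          = Rfun K N a b K.toNat σ hσd v + ((a : ℤ) : ZMod K.toNat)
        have hRv := key v ((hσd.1 v).choose) (hps v)
        rw [← hRv]
        push_cast
        ring
      intro t
      induction t using Int.induction_on with
      | zero => intro v; norm_num
      | succ k ih =>
        intro v
        have e : v + ((k : ℤ) + 1) * (a * N - b * K)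
            = (v + (k : ℤ) * (a * N - b * K)) + (a * N - b * K) := by ring
        rw [e, Rshift, ih]
        push_cast
        ring
      | pred k ih =>
        intro v
        have e : (v + (-(k : ℤ) - 1) * (a * N - b * K)) + (a * N - b * K)
            = v + (-(k : ℤ)) * (a * N - b * K) := by ring
        have h1 := Rshift (v + (-(k : ℤ) - 1) * (a * N - b * K))
        rw [e, ih] at h1
        have h2 := h1.symm
        push_cast at h2 ⊢
        linear_combination h2
  classical
  let F : {σ : ℤ × ℤ → ℤ | IsDPT K N a b σ ∧ σ (0, 0) = 0} →
      (Fin ((a * N - b * K - 1).toNat) → ZMod K.toNat) :=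
    fun σp i => Rfun K N a b K.toNat σp.1 σp.2.1 ((i.1 : ℤ) + 1)
  have hFinj : Function.Injective F := by
    rintro ⟨σ, hσd, hσ0⟩ ⟨τ, hτd, hτ0⟩ hFeq
    apply Subtype.ext
    show σ = τ
    obtain ⟨colσ, R0σ, Rlinσ⟩ := props σ hσd hσ0
    obtain ⟨colτ, R0τ, Rlinτ⟩ := props τ hτd hτ0
    have hR : ∀ i : Fin ((a * N - b * K - 1).toNat),
        Rfun K N a b K.toNat σ hσd ((i.1 : ℤ) + 1)
          = Rfun K N a b K.toNat τ hτd ((i.1 : ℤ) + 1) :=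
      fun i => congrFun hFeq i
    have hRall : ∀ v : ℤ, Rfun K N a b K.toNat σ hσd v = Rfun K N a b K.toNat τ hτd v := by
      intro v
      have hq := Int.emod_add_mul_ediv v (a * N - b * K)
      have hsplit : v = v % (a * N - b * K) + (v / (a * N - b * K)) * (a * N - b * K) := by
        linear_combination -hq
      rw [hsplit, Rlinσ, Rlinτ]
      congr 1
      have h0r : 0 ≤ v % (a * N - b * K) := Int.emod_nonneg v (ne_of_gt hm)
      have h1r : v % (a * N - b * K) < a * N - b * K := Int.emod_lt_of_pos v hm
      rcases eq_or_lt_of_le h0r with hzero | hpos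
      · rw [← hzero, R0σ, R0τ]
      · have haux : ∀ r mz : ℤ, 0 < r → r < mz → (r - 1).toNat < (mz - 1).toNat := by
          intro r mz p1 p2; omega
        have haux2 : ∀ r : ℤ, 0 < r → ((r - 1).toNat : ℤ) + 1 = r := by
          intro r p1; omega
        have hfin := hR ⟨(v % (a * N - b * K) - 1).toNat, haux _ _ hpos h1r⟩
        rw [haux2 _ hpos] at hfin
        exact hfin
    have hcol : ∀ x v : ℤ, (∃ y, σ (x, y) = v) ↔ (∃ y, τ (x, y) = v) := by
      intro x v
      rw [colσ x v, colτ x v, hRall v]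
    exact dpt_unique hσd hτd huw hcol hσ0 hτ0
  have hfin : Finite ↥{σ : ℤ × ℤ → ℤ | IsDPT K N a b σ ∧ σ (0, 0) = 0} :=
    Finite.of_injective F hFinj
  have hSet : {σ : ℤ × ℤ → ℤ | IsDPT K N a b σ ∧ σ (0, 0) = 0}.Finite :=
    Set.finite_coe_iff.mp hfin
  refine ⟨hSet, ?_⟩
  have hcard : {σ : ℤ × ℤ → ℤ | IsDPT K N a b σ ∧ σ (0, 0) = 0}.ncard
      ≤ K.toNat ^ (a * N - b * K - 1).toNat := by
    have h2 : {σ : ℤ × ℤ → ℤ | IsDPT K N a b σ ∧ σ (0, 0) = 0}.ncard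
        = Nat.card ↥{σ : ℤ × ℤ → ℤ | IsDPT K N a b σ ∧ σ (0, 0) = 0} :=
      (Nat.card_coe_set_eq _).symm
    rw [h2]
    calc Nat.card ↥{σ : ℤ × ℤ → ℤ | IsDPT K N a b σ ∧ σ (0, 0) = 0}
        ≤ Nat.card (Fin ((a * N - b * K - 1).toNat) → ZMod K.toNat) :=
          Nat.card_le_card_of_injective F hFinj
      _ = K.toNat ^ (a * N - b * K - 1).toNat := by
          rw [Nat.card_eq_fintype_card, Fintype.card_fun, ZMod.card, Fintype.card_fin]
  calc ({σ : ℤ × ℤ → ℤ | IsDPT K N a b σ ∧ σ (0, 0) = 0}.ncard : ℤ)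
      ≤ ((K.toNat ^ (a * N - b * K - 1).toNat : ℕ) : ℤ) := by exact_mod_cast hcard
    _ = K ^ (a * N - b * K - 1).toNat := by push_cast [hKc]; ring
end

section
/- Fix integers K, N, a, b with m = a*N − b*K > 0. Define two equivalence relations on DPT(K,N,a,b): σ ≈ τ if and only if there exist i, j ∈ ℤ with τ(x,y) = σ(x−i, y−j) for all (x,y) ∈ ℤ² (the ⟨D,L⟩-equivalence by translations), and σ ∼ τ if and only if there exists c ∈ ℤ with τ(x,y) = σ(x,y) + c for all (x,y) ∈ ℤ² (the ⟨π⟩-equivalence by adding constants). Then there is a bijection between the quotient sets DPT(K,N,a,b)/≈ and DPT(K,N,a,b)/∼. -/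
/-- Translation equivalence (the `⟨D,L⟩`-action): `σ ≈ τ` iff
`τ(x,y) = σ(x−i, y−j)` for some `i, j ∈ ℤ`. -/
def transRel (K N a b : ℤ)
    (σ τ : {σ : ℤ × ℤ → ℤ // IsDPT K N a b σ}) : Prop :=
  ∃ i j : ℤ, ∀ x y : ℤ, τ.1 (x, y) = σ.1 (x - i, y - j)

/-- Constant-shift equivalence (the `⟨π⟩`-action): `σ ∼ τ` iff
`τ(x,y) = σ(x,y) + c` for some `c ∈ ℤ`. -/
def shiftRel (K N a b : ℤ)
    (σ τ : {σ : ℤ × ℤ → ℤ // IsDPT K N a b σ}) : Prop :=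
  ∃ c : ℤ, ∀ x y : ℤ, τ.1 (x, y) = σ.1 (x, y) + c

open Submodule

/-- The index of the lattice spanned by two vectors in `ℤ × ℤ` equals |det|, provided det ≠ 0. -/
lemma index_span_pair (v w : ℤ × ℤ) (hd : v.1 * w.2 - v.2 * w.1 ≠ 0) :
    (span ℤ {v, w} : Submodule ℤ (ℤ × ℤ)).toAddSubgroup.index
      = (v.1 * w.2 - v.2 * w.1).natAbs := by
  classical
  set d : ℤ := v.1 * w.2 - v.2 * w.1 with hd_def
  set Nsub : Submodule ℤ (ℤ × ℤ) := span ℤ {v, w} with hN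
  have hv : v ∈ Nsub := subset_span (by simp)
  have hw : w ∈ Nsub := subset_span (by simp)
  -- d • anything is in Nsub
  have hdmem : ∀ z : ℤ × ℤ, d • z ∈ Nsub := by
    intro z
    have h1 : d • z = (z.1 * w.2 - z.2 * w.1) • v + (z.2 * v.1 - z.1 * v.2) • w := by
      obtain ⟨z1, z2⟩ := z; obtain ⟨v1, v2⟩ := v; obtain ⟨w1, w2⟩ := w
      simp only [hd_def, Prod.smul_mk, Prod.mk_add_mk, Prod.mk.injEq, smul_eq_mul]
      constructor <;> ring
    rw [h1]
    exact Nsub.add_mem (Nsub.smul_mem _ hv) (Nsub.smul_mem _ hw)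
  -- the subgroup dℤ × dℤ is contained in Nsub
  have hprod_le : ((AddSubgroup.zmultiples d).prod (AddSubgroup.zmultiples d))
      ≤ Nsub.toAddSubgroup := by
    rintro ⟨x, y⟩ ⟨⟨k, hk⟩, ⟨l, hl⟩⟩
    simp only [zsmul_eq_mul] at hk hl
    have : ((x, y) : ℤ × ℤ) = k • (d • ((1:ℤ),(0:ℤ))) + l • (d • ((0:ℤ),(1:ℤ))) := by
      simp [Prod.ext_iff, ← hk, ← hl, mul_comm]
    rw [Submodule.mem_toAddSubgroup] at *
    rw [this]
    exact Nsub.add_mem (Nsub.smul_mem _ (hdmem _)) (Nsub.smul_mem _ (hdmem _))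
  have hfin : Nsub.toAddSubgroup.index ≠ 0 := by
    have hdvd := AddSubgroup.index_dvd_of_le hprod_le
    intro h0
    rw [h0] at hdvd
    have : ((AddSubgroup.zmultiples d).prod (AddSubgroup.zmultiples d)).index
        = d.natAbs * d.natAbs := by
      simp [Int.index_zmultiples]
    rw [this] at hdvd
    exact (mul_ne_zero (Int.natAbs_ne_zero.mpr hd) (Int.natAbs_ne_zero.mpr hd))
      (Nat.eq_zero_of_zero_dvd hdvd)
  -- Smith normal form
  obtain ⟨n, snf⟩ := Nsub.smithNormalForm (Module.Basis.finTwoProd ℤ)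
  have hite := snf.toAddSubgroup_index_eq_ite
  have hn : n = 2 := by
    by_contra h
    rw [if_neg (by simpa using h)] at hite
    exact hfin hite
  subst hn
  rw [if_pos (by simp)] at hite
  rw [hite, Fin.prod_univ_two]
  simp only [Ideal.span_singleton_toAddSubgroup_eq_zmultiples, Int.index_zmultiples]
  rw [← Int.natAbs_mul]
  -- a basis of Nsub from v, w
  have hli : LinearIndependent ℤ (![v, w]) := by
    rw [Fintype.linearIndependent_iff]
    intro g hg
    have h1 : g 0 • v + g 1 • w = 0 := by
      simpa [Fin.sum_univ_two] using hg
    have hc1 : g 0 * v.1 + g 1 * w.1 = 0 := congrArg Prod.fst h1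
    have hc2 : g 0 * v.2 + g 1 * w.2 = 0 := congrArg Prod.snd h1
    have hg0 : g 0 * d = 0 := by
      have : g 0 * d = w.2 * (g 0 * v.1 + g 1 * w.1) - w.1 * (g 0 * v.2 + g 1 * w.2) := by
        rw [hd_def]; ring
      rw [this, hc1, hc2]; ring
    have hg1 : g 1 * d = 0 := by
      have : g 1 * d = -v.2 * (g 0 * v.1 + g 1 * w.1) + v.1 * (g 0 * v.2 + g 1 * w.2) := by
        rw [hd_def]; ring
      rw [this, hc1, hc2]; ring
    intro i
    have h2 : ∀ i : Fin 2, i = 0 ∨ i = 1 := by decide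
    rcases h2 i with rfl | rfl
    · exact (mul_eq_zero.mp hg0).resolve_right hd
    · exact (mul_eq_zero.mp hg1).resolve_right hd
  have hrange : Submodule.span ℤ (Set.range ![v, w]) = Nsub := by
    rw [hN]; congr 1
    simp [Set.pair_comm]
  let bV : Module.Basis (Fin 2) ℤ Nsub := (Module.Basis.span hli).map (LinearEquiv.ofEq _ _ hrange)
  have hbV : ∀ i, (bV i : ℤ × ℤ) = ![v, w] i := by
    intro i
    simp [bV, Module.Basis.span_apply]
  -- two endomorphisms of ℤ × ℤ with associated determinants
  set B := Module.Basis.finTwoProd ℤ with hB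
  let e1 : (ℤ × ℤ) ≃ₗ[ℤ] Nsub := B.equiv bV (Equiv.refl _)
  let e2 : (ℤ × ℤ) ≃ₗ[ℤ] Nsub := B.equiv snf.bN (Equiv.refl _)
  have hassoc : Associated (LinearMap.det (Nsub.subtype ∘ₗ (e1 : (ℤ × ℤ) →ₗ[ℤ] Nsub)))
      (LinearMap.det (Nsub.subtype ∘ₗ (e2 : (ℤ × ℤ) →ₗ[ℤ] Nsub))) :=
    LinearMap.associated_det_comp_equiv _ _ _
  -- compute det of the first map
  have hF1 : Nsub.subtype ∘ₗ (e1 : (ℤ × ℤ) →ₗ[ℤ] Nsub)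
      = Matrix.toLin B B !![v.1, w.1; v.2, w.2] := by
    apply Module.Basis.ext B
    intro i
    have hL : (Nsub.subtype ∘ₗ (e1 : (ℤ × ℤ) →ₗ[ℤ] Nsub)) (B i) = ![v, w] i := by
      simp only [LinearMap.comp_apply, LinearEquiv.coe_coe, Module.Basis.equiv_apply,
        Equiv.refl_apply, Submodule.subtype_apply, e1]
      exact hbV i
    rw [hL, Matrix.toLin_self]
    have h2 : ∀ i : Fin 2, i = 0 ∨ i = 1 := by decide
    rcases h2 i with rfl | rfl <;>
      simp [Fin.sum_univ_two, hB, Module.Basis.finTwoProd_zero, Module.Basis.finTwoProd_one,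
        Prod.ext_iff, Prod.smul_mk, smul_eq_mul]
  have hdet1 : LinearMap.det (Nsub.subtype ∘ₗ (e1 : (ℤ × ℤ) →ₗ[ℤ] Nsub)) = d := by
    rw [hF1, LinearMap.det_toLin, Matrix.det_fin_two_of, hd_def]; ring
  -- compute det of the second map
  let G : (ℤ × ℤ) ≃ₗ[ℤ] (ℤ × ℤ) := B.equiv snf.bM (Equiv.refl _)
  let A2 : Matrix (Fin 2) (Fin 2) ℤ := Matrix.of fun i j => if i = snf.f j then snf.a j else 0
  have hF2 : Nsub.subtype ∘ₗ (e2 : (ℤ × ℤ) →ₗ[ℤ] Nsub)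
      = (G : (ℤ × ℤ) →ₗ[ℤ] (ℤ × ℤ)) ∘ₗ Matrix.toLin B B A2 := by
    apply Module.Basis.ext B
    intro j
    have hsum : Matrix.toLin B B A2 (B j) = snf.a j • B (snf.f j) := by
      rw [Matrix.toLin_self]
      rw [Finset.sum_eq_single (snf.f j)]
      · simp [A2]
      · intro i _ hi
        simp [A2, Ne.symm hi, hi]
      · simp
    simp only [LinearMap.comp_apply, LinearEquiv.coe_coe, Module.Basis.equiv_apply, Equiv.refl_apply,
      hsum, map_smul, Submodule.subtype_apply, e2]
    rw [snf.snf j]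
    simp [G, Module.Basis.equiv_apply]
  have hdet2 : Int.natAbs (LinearMap.det (Nsub.subtype ∘ₗ (e2 : (ℤ × ℤ) →ₗ[ℤ] Nsub)))
      = Int.natAbs (snf.a 0 * snf.a 1) := by
    rw [hF2, LinearMap.det_comp, Int.natAbs_mul]
    have hu : IsUnit (LinearMap.det (G : (ℤ × ℤ) →ₗ[ℤ] (ℤ × ℤ))) := G.isUnit_det'
    rw [Int.isUnit_iff] at hu
    have hG1 : (LinearMap.det (G : (ℤ × ℤ) →ₗ[ℤ] (ℤ × ℤ))).natAbs = 1 := by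
      rcases hu with h | h <;> rw [h] <;> rfl
    rw [hG1, one_mul, LinearMap.det_toLin]
    have h2 : ∀ i : Fin 2, i = 0 ∨ i = 1 := by decide
    have hf01 : snf.f 1 ≠ snf.f 0 := fun h => absurd (snf.f.injective h) (by decide)
    rcases h2 (snf.f 0) with h0 | h0 <;> rcases h2 (snf.f 1) with h1 | h1
    · rw [h0] at hf01; rw [h1] at hf01; exact absurd rfl hf01
    · rw [Matrix.det_fin_two]
      simp [A2, h0, h1]
    · rw [Matrix.det_fin_two]
      simp [A2, h0, h1, Int.natAbs_neg, mul_comm]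
    · rw [h0] at hf01; rw [h1] at hf01; exact absurd rfl hf01
  rw [← hdet2, ← Int.associated_iff_natAbs.mp hassoc, hdet1]

namespace DPTAux

variable {K N a b : ℤ}

abbrev X (K N a b : ℤ) := {σ : ℤ × ℤ → ℤ // IsDPT K N a b σ}

lemma pair_add (x y : ℤ) (u : ℤ × ℤ) : (x, y) + u = (x + u.1, y + u.2) := by
  cases u; rw [Prod.mk_add_mk]

lemma periodK (σ : X K N a b) (z : ℤ × ℤ) : σ.1 (z + (K, -N)) = σ.1 z := by
  obtain ⟨x, y⟩ := z
  have h := σ.2.2.1 x y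
  rw [pair_add]
  simpa [sub_eq_add_neg] using h

lemma periodA (σ : X K N a b) (z : ℤ × ℤ) :
    σ.1 (z + (a, -b)) = σ.1 z + (a * N - b * K) := by
  obtain ⟨x, y⟩ := z
  have h := σ.2.2.2.1 x y
  rw [pair_add]
  simpa [sub_eq_add_neg] using h

/-- Shifting a DPT by a constant. -/
def shiftσ (σ : X K N a b) (c : ℤ) : X K N a b :=
  ⟨fun z => σ.1 z + c, by
    obtain ⟨surj, h1, h2, h3, h4⟩ := σ.2
    refine ⟨fun n => ?_, fun x y => by dsimp only; rw [h1], fun x y => by dsimp only; rw [h2]; ring,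
      fun x y => by dsimp only; have := h3 x y; omega,
      fun x y => by dsimp only; have := h4 x y; omega⟩
    obtain ⟨z, hz⟩ := surj (n - c)
    exact ⟨z, by dsimp only; rw [hz]; ring⟩⟩

/-- Translating a DPT. -/
def transσ (σ : X K N a b) (u : ℤ × ℤ) : X K N a b :=
  ⟨fun z => σ.1 (z + u), by
    obtain ⟨surj, h1, h2, h3, h4⟩ := σ.2
    refine ⟨fun n => ?_, fun x y => ?_, fun x y => ?_, fun x y => ?_, fun x y => ?_⟩
    · obtain ⟨z, hz⟩ := surj n
      exact ⟨z - u, by show σ.1 (z - u + u) = n; rw [sub_add_cancel, hz]⟩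
    · show σ.1 ((x + K, y - N) + u) = σ.1 ((x, y) + u)
      rw [pair_add, pair_add]
      rw [show x + K + u.1 = x + u.1 + K by ring, show y - N + u.2 = y + u.2 - N by ring]
      exact h1 (x + u.1) (y + u.2)
    · show σ.1 ((x + a, y - b) + u) = σ.1 ((x, y) + u) + (a * N - b * K)
      rw [pair_add, pair_add]
      rw [show x + a + u.1 = x + u.1 + a by ring, show y - b + u.2 = y + u.2 - b by ring]
      exact h2 (x + u.1) (y + u.2)
    · show σ.1 ((x, y) + u) < σ.1 ((x + 1, y) + u)
      rw [pair_add, pair_add]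
      rw [show x + 1 + u.1 = x + u.1 + 1 by ring]
      exact h3 (x + u.1) (y + u.2)
    · show σ.1 ((x, y) + u) < σ.1 ((x, y + 1) + u)
      rw [pair_add, pair_add]
      rw [show y + 1 + u.2 = y + u.2 + 1 by ring]
      exact h4 (x + u.1) (y + u.2)⟩

/-- The subgroup of periods (translations acting by a constant) of `σ`. -/
def Pgrp (σ : X K N a b) : AddSubgroup (ℤ × ℤ) where
  carrier := {u | ∃ c : ℤ, ∀ z, σ.1 (z + u) = σ.1 z + c}
  zero_mem' := ⟨0, fun z => by simp⟩
  add_mem' := by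
    rintro u u' ⟨c, hc⟩ ⟨c', hc'⟩
    exact ⟨c + c', fun z => by rw [← add_assoc, hc' (z + u), hc z, add_assoc]⟩
  neg_mem' := by
    rintro u ⟨c, hc⟩
    refine ⟨-c, fun z => ?_⟩
    have h := hc (z + -u)
    rw [neg_add_cancel_right] at h
    omega

/-- The subgroup of constants realized by translations of `σ`. -/
def Cgrp (σ : X K N a b) : AddSubgroup ℤ where
  carrier := {c | ∃ u : ℤ × ℤ, ∀ z, σ.1 (z + u) = σ.1 z + c}
  zero_mem' := ⟨0, fun z => by simp⟩
  add_mem' := by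
    rintro c c' ⟨u, hu⟩ ⟨u', hu'⟩
    exact ⟨u + u', fun z => by rw [← add_assoc, hu' (z + u), hu z, add_assoc]⟩
  neg_mem' := by
    rintro c ⟨u, hu⟩
    refine ⟨-u, fun z => ?_⟩
    have h := hu (z + -u)
    rw [neg_add_cancel_right] at h
    omega

/-- The subgroup of periods whose constant is a multiple of `m`. -/
def Qgrp (σ : X K N a b) : AddSubgroup (ℤ × ℤ) where
  carrier := {u | ∃ c : ℤ, ∀ z, σ.1 (z + u) = σ.1 z + (a * N - b * K) * c}
  zero_mem' := ⟨0, fun z => by simp⟩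
  add_mem' := by
    rintro u u' ⟨c, hc⟩ ⟨c', hc'⟩
    refine ⟨c + c', fun z => ?_⟩
    rw [← add_assoc, hc' (z + u), hc z, mul_add]
    ring
  neg_mem' := by
    rintro u ⟨c, hc⟩
    refine ⟨-c, fun z => ?_⟩
    have h := hc (z + -u)
    rw [neg_add_cancel_right] at h
    rw [h]
    ring

/-- The reference lattice. -/
def Msub (K N a b : ℤ) : Submodule ℤ (ℤ × ℤ) :=
  Submodule.span ℤ {((K, -N) : ℤ × ℤ), ((a, -b) : ℤ × ℤ)}

lemma Msub_le_Qgrp (σ : X K N a b) :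
    (Msub K N a b).toAddSubgroup ≤ Qgrp σ := by
  intro v hv
  rw [Submodule.mem_toAddSubgroup] at hv
  have hle : Msub K N a b ≤ AddSubgroup.toIntSubmodule (Qgrp σ) := by
    rw [Msub, Submodule.span_le]
    rintro x (rfl | rfl)
    · exact ⟨0, fun z => by rw [periodK σ z]; ring⟩
    · exact ⟨1, fun z => by rw [periodA σ z]; ring⟩
  exact hle hv

lemma Msub_le_Pgrp (σ : X K N a b) :
    (Msub K N a b).toAddSubgroup ≤ Pgrp σ := by
  intro v hv
  obtain ⟨c, hc⟩ := Msub_le_Qgrp σ hv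
  exact ⟨(a * N - b * K) * c, hc⟩

/-- The key rigidity lemma: cells with equal entries are congruent mod the lattice. -/
lemma key (hm : 0 < a * N - b * K) (σ : X K N a b) {p q : ℤ × ℤ}
    (h : σ.1 p = σ.1 q) : p - q ∈ (Msub K N a b).toAddSubgroup := by
  set m' : ℕ := (a * N - b * K).natAbs with hm'
  haveI : NeZero m' := ⟨by simpa [hm'] using hm.ne'⟩
  have hcast : ((a * N - b * K : ℤ) : ZMod m') = 0 := by
    rw [show (a * N - b * K : ℤ) = (m' : ℤ) by rw [hm', Int.natAbs_of_nonneg hm.le]]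
    simp
  set MA : AddSubgroup (ℤ × ℤ) := (Msub K N a b).toAddSubgroup with hMA
  have wd : ∀ z z' : ℤ × ℤ, (QuotientAddGroup.leftRel MA) z z' →
      ((σ.1 z : ℤ) : ZMod m') = ((σ.1 z' : ℤ) : ZMod m') := by
    intro z z' hzz
    rw [QuotientAddGroup.leftRel_apply] at hzz
    obtain ⟨c, hc⟩ := Msub_le_Qgrp σ hzz
    have h1 : σ.1 z' = σ.1 z + (a * N - b * K) * c := by
      have := hc z
      rwa [add_neg_cancel_left] at this
    rw [h1, Int.cast_add, Int.cast_mul, hcast, zero_mul, add_zero]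
  let F : (ℤ × ℤ) ⧸ MA → ZMod m' :=
    fun x => Quotient.liftOn' x (fun z => ((σ.1 z : ℤ) : ZMod m')) wd
  have hFsurj : Function.Surjective F := by
    intro x
    obtain ⟨n, hn⟩ := ZMod.intCast_surjective (n := m') x
    obtain ⟨z, hz⟩ := σ.2.1 n
    exact ⟨Quotient.mk'' z, by simp only [F, Quotient.liftOn'_mk'', hz, hn]⟩
  have hcard1 : Nat.card ((ℤ × ℤ) ⧸ MA) = m' := by
    have hdet : (((K, -N) : ℤ × ℤ).1 * ((a, -b) : ℤ × ℤ).2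
        - ((K, -N) : ℤ × ℤ).2 * ((a, -b) : ℤ × ℤ).1) ≠ 0 := by
      show K * (-b) - (-N) * a ≠ 0
      intro h0
      apply hm.ne'
      rw [← h0]
      ring
    rw [← AddSubgroup.index_eq_card, hMA, Msub, index_span_pair _ _ hdet]
    show (K * (-b) - (-N) * a).natAbs = m'
    rw [hm']
    congr 1
    ring
  have hfin : Finite ((ℤ × ℤ) ⧸ MA) := by
    have : Nat.card ((ℤ × ℤ) ⧸ MA) ≠ 0 := by
      rw [hcard1]; exact NeZero.ne m'
    exact (Nat.card_ne_zero.mp this).2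
  haveI := hfin
  haveI : Fintype ((ℤ × ℤ) ⧸ MA) := Fintype.ofFinite _
  have hbij : Function.Bijective F := by
    rw [Fintype.bijective_iff_surjective_and_card]
    refine ⟨hFsurj, ?_⟩
    rw [← Nat.card_eq_fintype_card, hcard1, ← Nat.card_eq_fintype_card, Nat.card_zmod]
  have hFeq : F (Quotient.mk'' p) = F (Quotient.mk'' q) := by
    simp only [F, Quotient.liftOn'_mk'', h]
  have := hbij.1 hFeq
  have hpq : -p + q ∈ MA := by
    rwa [← QuotientAddGroup.leftRel_apply, ← Quotient.eq'']
  have h3 := MA.neg_mem hpq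
  rw [neg_add_rev, neg_neg] at h3
  rwa [sub_eq_add_neg, add_comm]

/-- The joint equivalence (translations and constant shifts together). -/
def jointRel (K N a b : ℤ) (σ τ : X K N a b) : Prop :=
  ∃ (u : ℤ × ℤ) (c : ℤ), ∀ z, τ.1 z = σ.1 (z + u) + c

lemma jointRel_equiv : Equivalence (jointRel K N a b) := by
  constructor
  · exact fun σ => ⟨0, 0, fun z => by simp⟩
  · rintro σ τ ⟨u, c, h⟩
    refine ⟨-u, -c, fun z => ?_⟩
    have := h (z + -u)
    rw [neg_add_cancel_right] at this
    omega
  · rintro σ τ ρ ⟨u, c, h⟩ ⟨u', c', h'⟩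
    refine ⟨u' + u, c + c', fun z => ?_⟩
    rw [h' z, h (z + u'), add_assoc z u' u]
    omega

lemma transRel_equiv : Equivalence (transRel K N a b) := by
  constructor
  · exact fun σ => ⟨0, 0, fun x y => by simp⟩
  · rintro σ τ ⟨i, j, h⟩
    refine ⟨-i, -j, fun x y => ?_⟩
    have := h (x + i) (y + j)
    simp only [add_sub_cancel_right] at this
    rw [← this, sub_neg_eq_add, sub_neg_eq_add]
  · rintro σ τ ρ ⟨i, j, h⟩ ⟨i', j', h'⟩
    refine ⟨i + i', j + j', fun x y => ?_⟩
    rw [h' x y, h (x - i') (y - j')]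
    have he : ((x - (i + i'), y - (j + j')) : ℤ × ℤ) = (x - i' - i, y - j' - j) := by
      rw [Prod.mk.injEq]; constructor <;> ring
    rw [he]
  
lemma shiftRel_equiv : Equivalence (shiftRel K N a b) := by
  constructor
  · exact fun σ => ⟨0, fun x y => by simp⟩
  · rintro σ τ ⟨c, h⟩
    exact ⟨-c, fun x y => by rw [h x y]; ring⟩
  · rintro σ τ ρ ⟨c, h⟩ ⟨c', h'⟩
    exact ⟨c + c', fun x y => by rw [h' x y, h x y]; ring⟩

lemma trans_to_joint {σ τ : X K N a b} (h : transRel K N a b σ τ) :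
    jointRel K N a b σ τ := by
  obtain ⟨i, j, h⟩ := h
  refine ⟨(-i, -j), 0, fun z => ?_⟩
  obtain ⟨x, y⟩ := z
  rw [pair_add, add_zero, h x y]
  have he : ((x + ((-i, -j) : ℤ × ℤ).1, y + ((-i, -j) : ℤ × ℤ).2) : ℤ × ℤ)
      = (x - i, y - j) := by
    rw [Prod.mk.injEq]; constructor <;> (show _ = _; ring)
  rw [he]

lemma shift_to_joint {σ τ : X K N a b} (h : shiftRel K N a b σ τ) :
    jointRel K N a b σ τ := by
  obtain ⟨c, h⟩ := h
  refine ⟨0, c, fun z => ?_⟩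
  obtain ⟨x, y⟩ := z
  rw [add_zero, h x y]

/-- Projection from the translation quotient to the joint quotient. -/
def p₁ (K N a b : ℤ) : Quot (transRel K N a b) → Quot (jointRel K N a b) :=
  Quot.lift (Quot.mk _) (fun _ _ h => Quot.sound (trans_to_joint h))

/-- Projection from the shift quotient to the joint quotient. -/
def p₂ (K N a b : ℤ) : Quot (shiftRel K N a b) → Quot (jointRel K N a b) :=
  Quot.lift (Quot.mk _) (fun _ _ h => Quot.sound (shift_to_joint h))

lemma quot_trans_eq_iff {σ τ : X K N a b} :
    Quot.mk (transRel K N a b) σ = Quot.mk (transRel K N a b) τ ↔ transRel K N a b σ τ := by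
  rw [Quot.eq, Equivalence.eqvGen_iff transRel_equiv]

lemma quot_shift_eq_iff {σ τ : X K N a b} :
    Quot.mk (shiftRel K N a b) σ = Quot.mk (shiftRel K N a b) τ ↔ shiftRel K N a b σ τ := by
  rw [Quot.eq, Equivalence.eqvGen_iff shiftRel_equiv]

lemma quot_joint_eq_iff {σ τ : X K N a b} :
    Quot.mk (jointRel K N a b) σ = Quot.mk (jointRel K N a b) τ ↔ jointRel K N a b σ τ := by
  rw [Quot.eq, Equivalence.eqvGen_iff jointRel_equiv]

/-- The shift classes inside a joint class are parametrized by `ℤ ⧸ Cgrp σ`. -/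
noncomputable def e₁ (σ : X K N a b) :
    (ℤ ⧸ Cgrp σ) ≃
      {t : Quot (transRel K N a b) // p₁ K N a b t = Quot.mk (jointRel K N a b) σ} := by
  have hmem : ∀ c : ℤ, p₁ K N a b (Quot.mk _ (shiftσ σ c)) = Quot.mk (jointRel K N a b) σ := by
    intro c
    show Quot.mk (jointRel K N a b) (shiftσ σ c) = Quot.mk (jointRel K N a b) σ
    refine quot_joint_eq_iff.mpr ⟨0, -c, fun z => ?_⟩
    show σ.1 z = σ.1 (z + 0) + c + -c
    rw [add_zero]; ring
  have wd : ∀ c c' : ℤ, (QuotientAddGroup.leftRel (Cgrp σ)) c c' →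
      (⟨Quot.mk _ (shiftσ σ c), hmem c⟩ :
        {t : Quot (transRel K N a b) // p₁ K N a b t = Quot.mk (jointRel K N a b) σ})
      = ⟨Quot.mk _ (shiftσ σ c'), hmem c'⟩ := by
    intro c c' hcc
    rw [QuotientAddGroup.leftRel_apply] at hcc
    obtain ⟨u, hu⟩ := hcc
    refine Subtype.ext ?_
    show Quot.mk _ (shiftσ σ c) = Quot.mk _ (shiftσ σ c')
    refine quot_trans_eq_iff.mpr ⟨-u.1, -u.2, fun x y => ?_⟩
    show σ.1 (x, y) + c' = σ.1 (x - -u.1, y - -u.2) + c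
    have he : ((x - -u.1, y - -u.2) : ℤ × ℤ) = (x, y) + u := by
      rw [pair_add, Prod.mk.injEq]; constructor <;> ring
    rw [he, hu (x, y)]
    ring
  refine Equiv.ofBijective
    (fun x => Quotient.liftOn' x
      (fun c => ⟨Quot.mk _ (shiftσ σ c), hmem c⟩) wd) ⟨?_, ?_⟩
  · intro x y hxy
    refine Quotient.inductionOn₂' x y (fun c c' h => ?_) hxy
    simp only [Quotient.liftOn'_mk''] at h
    have h2 := quot_trans_eq_iff.mp (congrArg Subtype.val h)
    obtain ⟨i, j, h3⟩ := h2
    refine Quotient.sound' (QuotientAddGroup.leftRel_apply.mpr ⟨(-i, -j), fun z => ?_⟩)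
    obtain ⟨x0, y0⟩ := z
    have h4 := h3 x0 y0
    have he : ((x0 - i, y0 - j) : ℤ × ℤ) = (x0, y0) + (-i, -j) := by
      rw [pair_add, Prod.mk.injEq]; constructor <;> (show _ = _ ; ring)
    rw [he] at h4
    show σ.1 ((x0, y0) + (-i, -j)) = σ.1 (x0, y0) + (-c + c')
    have h5 : σ.1 (x0, y0) + c' = σ.1 ((x0, y0) + (-i, -j)) + c := h4
    omega
  · rintro ⟨t, ht⟩
    obtain ⟨τ, rfl⟩ := Quot.exists_rep t
    have hj : jointRel K N a b σ τ :=
      jointRel_equiv.symm (quot_joint_eq_iff.mp ht)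
    obtain ⟨u, c, hj⟩ := hj
    refine ⟨Quotient.mk'' c, Subtype.ext ?_⟩
    show Quot.mk _ (shiftσ σ c) = Quot.mk _ τ
    refine quot_trans_eq_iff.mpr ⟨-u.1, -u.2, fun x y => ?_⟩
    show τ.1 (x, y) = σ.1 (x - -u.1, y - -u.2) + c
    have he : ((x - -u.1, y - -u.2) : ℤ × ℤ) = (x, y) + u := by
      rw [pair_add, Prod.mk.injEq]; constructor <;> ring
    rw [he, hj (x, y)]

/-- The translation classes inside a joint class are parametrized by `(ℤ×ℤ) ⧸ Pgrp σ`. -/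
noncomputable def e₂ (σ : X K N a b) :
    ((ℤ × ℤ) ⧸ Pgrp σ) ≃
      {s : Quot (shiftRel K N a b) // p₂ K N a b s = Quot.mk (jointRel K N a b) σ} := by
  have hmem : ∀ u : ℤ × ℤ,
      p₂ K N a b (Quot.mk _ (transσ σ u)) = Quot.mk (jointRel K N a b) σ := by
    intro u
    show Quot.mk (jointRel K N a b) (transσ σ u) = Quot.mk (jointRel K N a b) σ
    refine quot_joint_eq_iff.mpr ⟨-u, 0, fun z => ?_⟩
    show σ.1 z = σ.1 (z + -u + u) + 0
    rw [neg_add_cancel_right, add_zero]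
  have wd : ∀ u u' : ℤ × ℤ, (QuotientAddGroup.leftRel (Pgrp σ)) u u' →
      (⟨Quot.mk _ (transσ σ u), hmem u⟩ :
        {s : Quot (shiftRel K N a b) // p₂ K N a b s = Quot.mk (jointRel K N a b) σ})
      = ⟨Quot.mk _ (transσ σ u'), hmem u'⟩ := by
    intro u u' huu
    rw [QuotientAddGroup.leftRel_apply] at huu
    obtain ⟨c, hc⟩ := huu
    refine Subtype.ext ?_
    show Quot.mk _ (transσ σ u) = Quot.mk _ (transσ σ u')
    refine quot_shift_eq_iff.mpr ⟨c, fun x y => ?_⟩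
    show σ.1 ((x, y) + u') = σ.1 ((x, y) + u) + c
    have h1 := hc ((x, y) + u)
    rwa [add_assoc, add_neg_cancel_left] at h1
  refine Equiv.ofBijective
    (fun x => Quotient.liftOn' x
      (fun u => ⟨Quot.mk _ (transσ σ u), hmem u⟩) wd) ⟨?_, ?_⟩
  · intro x y hxy
    refine Quotient.inductionOn₂' x y (fun u u' h => ?_) hxy
    simp only [Quotient.liftOn'_mk''] at h
    have h2 := quot_shift_eq_iff.mp (congrArg Subtype.val h)
    obtain ⟨c, h3⟩ := h2
    refine Quotient.sound' (QuotientAddGroup.leftRel_apply.mpr ⟨c, fun z => ?_⟩)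
    have h4 := h3 (z + -u).1 (z + -u).2
    have h5 : σ.1 (z + -u + u') = σ.1 (z + -u + u) + c := by
      simpa only [transσ, Prod.mk.eta] using h4
    rw [neg_add_cancel_right] at h5
    rwa [← add_assoc]
  · rintro ⟨s, hs⟩
    obtain ⟨τ, rfl⟩ := Quot.exists_rep s
    have hj : jointRel K N a b σ τ :=
      jointRel_equiv.symm (quot_joint_eq_iff.mp hs)
    obtain ⟨u, c, hj⟩ := hj
    refine ⟨Quotient.mk'' u, Subtype.ext ?_⟩
    show Quot.mk _ (transσ σ u) = Quot.mk _ τ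
    refine quot_shift_eq_iff.mpr ⟨c, fun x y => ?_⟩
    exact hj (x, y)

/-- The main counting equivalence, via the rigidity lemma. -/
noncomputable def e₃ (hm : 0 < a * N - b * K) (σ : X K N a b) :
    ((ℤ × ℤ) ⧸ Pgrp σ) ≃ (ℤ ⧸ Cgrp σ) := by
  have wd : ∀ u u' : ℤ × ℤ, (QuotientAddGroup.leftRel (Pgrp σ)) u u' →
      (Quotient.mk'' (σ.1 u) : ℤ ⧸ Cgrp σ) = Quotient.mk'' (σ.1 u') := by
    intro u u' huu
    rw [QuotientAddGroup.leftRel_apply] at huu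
    obtain ⟨c, hc⟩ := huu
    have h1 := hc u
    rw [add_neg_cancel_left] at h1
    refine Quotient.sound' (QuotientAddGroup.leftRel_apply.mpr ?_)
    have h2 : -σ.1 u + σ.1 u' = c := by omega
    rw [h2]
    exact ⟨-u + u', hc⟩
  refine Equiv.ofBijective
    (fun x => Quotient.liftOn' x (fun u => (Quotient.mk'' (σ.1 u) : ℤ ⧸ Cgrp σ)) wd) ⟨?_, ?_⟩
  · intro x y hxy
    refine Quotient.inductionOn₂' x y (fun u u' h => ?_) hxy
    simp only [Quotient.liftOn'_mk''] at h
    have h2 := QuotientAddGroup.leftRel_apply.mp (Quotient.exact' h)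
    obtain ⟨v, hv⟩ := h2
    have h3 := hv u
    have h4 : σ.1 (u + v) = σ.1 u' := by omega
    have h5 : (u + v) - u' ∈ Pgrp σ := Msub_le_Pgrp σ (key hm σ h4)
    have h6 : v ∈ Pgrp σ := ⟨-σ.1 u + σ.1 u', hv⟩
    have h7 : -u + u' = v - ((u + v) - u') := by ring
    refine Quotient.sound' (QuotientAddGroup.leftRel_apply.mpr ?_)
    rw [h7]
    exact (Pgrp σ).sub_mem h6 h5
  · intro x
    refine Quotient.inductionOn' x (fun n => ?_)
    obtain ⟨z, hz⟩ := σ.2.1 n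
    exact ⟨Quotient.mk'' z, by simp only [Quotient.liftOn'_mk'', hz]⟩

end DPTAux

/-- There is a bijection between `DPT(K,N,a,b)/⟨D,L⟩` (the quotient by
translations) and `DPT(K,N,a,b)/⟨π⟩` (the quotient by adding constants). -/
theorem dpt_quotients_bijection (K N a b : ℤ) (hm : 0 < a * N - b * K) :
    Nonempty (Quot (transRel K N a b) ≃ Quot (shiftRel K N a b)) := by
  have h : ∀ q : Quot (DPTAux.jointRel K N a b),
      Nonempty ({t : Quot (transRel K N a b) // DPTAux.p₁ K N a b t = q}
        ≃ {s : Quot (shiftRel K N a b) // DPTAux.p₂ K N a b s = q}) := by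
    apply Quot.ind
    intro σ
    exact ⟨(DPTAux.e₁ σ).symm.trans ((DPTAux.e₃ hm σ).symm.trans (DPTAux.e₂ σ))⟩
  exact ⟨(Equiv.sigmaFiberEquiv (DPTAux.p₁ K N a b)).symm.trans
    ((Equiv.sigmaCongrRight fun q => Classical.choice (h q)).trans
      (Equiv.sigmaFiberEquiv (DPTAux.p₂ K N a b)))⟩
end
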